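/- arXiv:1701.04545 — 4 statements merged into one kernel-verified Lean document; each statement's English description precedes it below -/
import Mathlib

section
/- Under the hypotheses of the L₁-invariance principle (M distance-invariant compact metric space), for any N-point multiset D_N ⊂ M and any r one has λ_r[D_N] + θ^Δ_r[D_N] = (v_r − v_r²)·N², where λ_r[D_N] = ∫_M (#{B_r(y) ∩ D_N} − N v_r)² dμ(y) and θ^Δ_r[D_N] = Σ_{x₁,x₂ ∈ D_N} θ^Δ_r(x₁,x₂). -/
open MeasureTheory Metric

private lemma list_sum_map_fin {α : Type*} (g : α → ℝ) :
    ∀ l : List α, (l.map g).sum = ∑ i : Fin l.length, g (l.get i)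
  | [] => by simp
  | a :: l => by
    rw [List.map_cons, List.sum_cons, list_sum_map_fin g l]
    exact (Fin.sum_univ_succ (f := fun i : Fin (l.length + 1) => g ((a :: l).get i))).symm

/-- L₁-invariance principle for point sets: in a compact distance-invariant metric
space with probability measure `μ`, for any `N`-point multiset `D_N` (a list, with
repetitions allowed) and any radius `r`,
`λ_r[D_N] + θ^Δ_r[D_N] = (v_r − v_r²)·N²`, where
`λ_r[D_N] = ∫ (#{B_r(y) ∩ D_N} − N v_r)² dμ(y)` and
`θ^Δ_r[D_N] = Σ_{x₁,x₂ ∈ D_N} (1/2)μ(B_r(x₁) Δ B_r(x₂))`. -/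
theorem l1_invariance_point_sets {M : Type*} [MetricSpace M] [CompactSpace M]
    [MeasurableSpace M] [BorelSpace M]
    (μ : Measure M) [IsProbabilityMeasure μ]
    (r : ℝ) (v : ℝ) (hv : ∀ y : M, (μ (ball y r)).toReal = v)
    (D : List M) :
    (∫ y, ((D.map fun x => (ball y r).indicator (fun _ => (1 : ℝ)) x).sum
            - (D.length : ℝ) * v) ^ 2 ∂μ)
      + (D.map fun x₁ =>
          (D.map fun x₂ =>
            (1 / 2) * (μ (symmDiff (ball x₁ r) (ball x₂ r))).toReal).sum).sum
      = (v - v ^ 2) * (D.length : ℝ) ^ 2 := by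
  classical
  let f : M → M → ℝ := fun x => (ball x r).indicator (fun _ => (1 : ℝ))
  have hfdef : f = fun x => (ball x r).indicator (fun _ => (1 : ℝ)) := rfl
  have hsymm : ∀ (y x : M), (ball y r).indicator (fun _ => (1 : ℝ)) x = f x y := by
    intro y x
    simp [hfdef, Set.indicator_apply, mem_ball, dist_comm]
  have hint : ∀ x : M, Integrable (f x) μ :=
    fun x => (integrable_const (1 : ℝ)).indicator measurableSet_ball
  have hintf : ∀ x : M, ∫ y, f x y ∂μ = v := by
    intro x
    rw [hfdef]
    simp only []
    rw [integral_indicator_const (1 : ℝ) measurableSet_ball, smul_eq_mul, mul_one]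
    exact hv x
  have hmul : ∀ (x₁ x₂ : M), (fun y => f x₁ y * f x₂ y)
      = (ball x₁ r ∩ ball x₂ r).indicator (fun _ => (1 : ℝ)) := by
    intro x₁ x₂
    funext y
    rw [hfdef]
    simpa using (Set.inter_indicator_mul (s := ball x₁ r) (t := ball x₂ r)
      (fun _ => (1 : ℝ)) (fun _ => (1 : ℝ)) y).symm
  have hintmul : ∀ x₁ x₂ : M, Integrable (fun y => f x₁ y * f x₂ y) μ := by
    intro x₁ x₂
    rw [hmul]
    exact (integrable_const (1 : ℝ)).indicator (measurableSet_ball.inter measurableSet_ball)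
  have hI : ∀ x₁ x₂ : M, ∫ y, f x₁ y * f x₂ y ∂μ = (μ (ball x₁ r ∩ ball x₂ r)).toReal := by
    intro x₁ x₂
    rw [hmul, integral_indicator_const (1 : ℝ) (measurableSet_ball.inter measurableSet_ball),
      smul_eq_mul, mul_one]
    rfl
  have hθ : ∀ x₁ x₂ : M, (1 / 2 : ℝ) * (μ (symmDiff (ball x₁ r) (ball x₂ r))).toReal
      = v - (μ (ball x₁ r ∩ ball x₂ r)).toReal := by
    intro x₁ x₂
    have hfin : ∀ s : Set M, μ s ≠ ⊤ := fun s => measure_ne_top μ s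
    have h1 : μ (ball x₁ r ∩ ball x₂ r) + μ (ball x₁ r \ ball x₂ r) = μ (ball x₁ r) :=
      measure_inter_add_diff _ measurableSet_ball
    have h2 : μ (ball x₂ r ∩ ball x₁ r) + μ (ball x₂ r \ ball x₁ r) = μ (ball x₂ r) :=
      measure_inter_add_diff _ measurableSet_ball
    have hΔ : μ (symmDiff (ball x₁ r) (ball x₂ r))
        = μ (ball x₁ r \ ball x₂ r) + μ (ball x₂ r \ ball x₁ r) := by
      rw [symmDiff_def]
      exact measure_union (disjoint_sdiff_sdiff) (measurableSet_ball.diff measurableSet_ball)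
    have e1 : (μ (ball x₁ r ∩ ball x₂ r)).toReal + (μ (ball x₁ r \ ball x₂ r)).toReal = v := by
      rw [← ENNReal.toReal_add (hfin _) (hfin _), h1, hv]
    have e2 : (μ (ball x₁ r ∩ ball x₂ r)).toReal + (μ (ball x₂ r \ ball x₁ r)).toReal = v := by
      rw [Set.inter_comm, ← ENNReal.toReal_add (hfin _) (hfin _), h2, hv]
    rw [hΔ, ENNReal.toReal_add (hfin _) (hfin _)]
    linarith
  -- convert list sums to Fin sums
  have hconv1 : ∀ y : M,
      ((D.map fun x => (ball y r).indicator (fun _ => (1 : ℝ)) x).sum)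
        = ∑ i : Fin D.length, f (D.get i) y := by
    intro y
    rw [list_sum_map_fin]
    exact Finset.sum_congr rfl fun i _ => hsymm y _
  have hconv2 :
      (D.map fun x₁ => (D.map fun x₂ =>
          (1 / 2) * (μ (symmDiff (ball x₁ r) (ball x₂ r))).toReal).sum).sum
      = ∑ i : Fin D.length, ∑ j : Fin D.length,
          (v - (μ (ball (D.get i) r ∩ ball (D.get j) r)).toReal) := by
    rw [list_sum_map_fin]
    refine Finset.sum_congr rfl fun i _ => ?_
    rw [list_sum_map_fin]
    exact Finset.sum_congr rfl fun j _ => hθ _ _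
  -- integrand expansion
  have hSint : Integrable (fun y => ∑ i : Fin D.length, f (D.get i) y) μ :=
    integrable_finset_sum _ fun i _ => hint _
  have hS2int : Integrable (fun y => ∑ i : Fin D.length, ∑ j : Fin D.length, f (D.get i) y * f (D.get j) y) μ :=
    integrable_finset_sum _ fun i _ => integrable_finset_sum _ fun j _ => hintmul _ _
  have hexp : ∀ y : M, ((∑ i : Fin D.length, f (D.get i) y) - (D.length : ℝ) * v) ^ 2
      = (∑ i : Fin D.length, ∑ j : Fin D.length, f (D.get i) y * f (D.get j) y)
        - (2 * ((D.length : ℝ) * v)) * (∑ i : Fin D.length, f (D.get i) y) + ((D.length : ℝ) * v) ^ 2 := by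
    intro y
    rw [← Finset.sum_mul_sum]
    ring
  have hsubint : Integrable (fun y => (∑ i : Fin D.length, ∑ j : Fin D.length, f (D.get i) y * f (D.get j) y)
      - (2 * ((D.length : ℝ) * v)) * (∑ i : Fin D.length, f (D.get i) y)) μ := hS2int.sub (hSint.const_mul (2 * ((D.length : ℝ) * v)))
  have hintS : ∫ y, (∑ i : Fin D.length, f (D.get i) y) ∂μ = (D.length : ℝ) * v := by
    rw [integral_finset_sum _ fun i _ => hint _]
    simp [hintf]
  have hintS2 : ∫ y, (∑ i : Fin D.length, ∑ j : Fin D.length, f (D.get i) y * f (D.get j) y) ∂μ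
      = ∑ i : Fin D.length, ∑ j : Fin D.length, (μ (ball (D.get i) r ∩ ball (D.get j) r)).toReal := by
    rw [integral_finset_sum _ fun i _ => integrable_finset_sum _ fun j _ => hintmul _ _]
    refine Finset.sum_congr rfl fun i _ => ?_
    rw [integral_finset_sum _ fun j _ => hintmul _ _]
    exact Finset.sum_congr rfl fun j _ => hI _ _
  have hlam : (∫ y, ((∑ i : Fin D.length, f (D.get i) y) - (D.length : ℝ) * v) ^ 2 ∂μ)
      = (∑ i : Fin D.length, ∑ j : Fin D.length, (μ (ball (D.get i) r ∩ ball (D.get j) r)).toReal) - ((D.length : ℝ) * v) ^ 2 := by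
    have e0 : (∫ y, ((∑ i : Fin D.length, f (D.get i) y) - (D.length : ℝ) * v) ^ 2 ∂μ)
        = ∫ y, (((∑ i : Fin D.length, ∑ j : Fin D.length, f (D.get i) y * f (D.get j) y)
            - (2 * ((D.length : ℝ) * v)) * (∑ i : Fin D.length, f (D.get i) y)) + ((D.length : ℝ) * v) ^ 2) ∂μ :=
      integral_congr_ae (Filter.Eventually.of_forall hexp)
    have e1 : (∫ y, (((∑ i : Fin D.length, ∑ j : Fin D.length, f (D.get i) y * f (D.get j) y)
            - (2 * ((D.length : ℝ) * v)) * (∑ i : Fin D.length, f (D.get i) y)) + ((D.length : ℝ) * v) ^ 2) ∂μ)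
        = (∫ y, ((∑ i : Fin D.length, ∑ j : Fin D.length, f (D.get i) y * f (D.get j) y)
            - (2 * ((D.length : ℝ) * v)) * (∑ i : Fin D.length, f (D.get i) y)) ∂μ) + ∫ _, (((D.length : ℝ) * v) ^ 2 : ℝ) ∂μ :=
      integral_add hsubint (integrable_const _)
    have e2 : (∫ y, ((∑ i : Fin D.length, ∑ j : Fin D.length, f (D.get i) y * f (D.get j) y)
            - (2 * ((D.length : ℝ) * v)) * (∑ i : Fin D.length, f (D.get i) y)) ∂μ)
        = (∫ y, (∑ i : Fin D.length, ∑ j : Fin D.length, f (D.get i) y * f (D.get j) y) ∂μ)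
          - ∫ y, (2 * ((D.length : ℝ) * v)) * (∑ i : Fin D.length, f (D.get i) y) ∂μ :=
      integral_sub hS2int (hSint.const_mul (2 * ((D.length : ℝ) * v)))
    have e3 : (∫ y, (2 * ((D.length : ℝ) * v)) * (∑ i : Fin D.length, f (D.get i) y) ∂μ)
        = (2 * ((D.length : ℝ) * v)) * ((D.length : ℝ) * v) := by rw [integral_const_mul, hintS]
    rw [e0, e1, e2, e3, hintS2, integral_const, probReal_univ, one_smul]
    ring
  have hgoal1 : (∫ y, ((D.map fun x => (ball y r).indicator (fun _ => (1 : ℝ)) x).sum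
            - (D.length : ℝ) * v) ^ 2 ∂μ)
      = ∫ y, ((∑ i : Fin D.length, f (D.get i) y) - (D.length : ℝ) * v) ^ 2 ∂μ := by
    refine integral_congr_ae (Filter.Eventually.of_forall fun y => ?_)
    beta_reduce
    rw [hconv1 y]
  rw [hgoal1, hlam, hconv2]
  simp only [Finset.sum_sub_distrib, Finset.sum_const, Finset.card_univ, Fintype.card_fin,
    nsmul_eq_mul]
  ring
end

section
/- On the unit sphere S^d, there exists a constant γ > 0 (namely γ = (∫_{S^d} |⟨x,y⟩| dμ(y))^{-1} for any fixed x ∈ S^d, which is independent of x) such that τ(y₁,y₂) = γ · θ^Δ(η♮, y₁,y₂) for all y₁, y₂ ∈ S^d, where τ(y₁,y₂) = ‖y₁−y₂‖/2 and η♮(r) = sin r. -/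
open MeasureTheory Real Set

namespace ChordalAux

variable {d : ℕ}

local notation "E" => EuclideanSpace ℝ (Fin (d + 1))
local notation "S" => Metric.sphere (0 : EuclideanSpace ℝ (Fin (d + 1))) 1

set_option linter.unusedSectionVars false

noncomputable def sphereIso (f : EuclideanSpace ℝ (Fin (d + 1)) ≃ₗᵢ[ℝ] EuclideanSpace ℝ (Fin (d + 1))) :
    (Metric.sphere (0 : EuclideanSpace ℝ (Fin (d + 1))) 1) ≃ᵢ
    (Metric.sphere (0 : EuclideanSpace ℝ (Fin (d + 1))) 1) where
  toFun y := ⟨f y, by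
    have hy : ‖(y : E)‖ = 1 := mem_sphere_zero_iff_norm.mp y.2
    simp [mem_sphere_zero_iff_norm, hy]⟩
  invFun y := ⟨f.symm y, by
    have hy : ‖(y : E)‖ = 1 := mem_sphere_zero_iff_norm.mp y.2
    simp [mem_sphere_zero_iff_norm, hy]⟩
  left_inv y := by ext : 1; simp
  right_inv y := by ext : 1; simp
  isometry_toFun := Isometry.of_dist_eq fun a b => by
    simp [Subtype.dist_eq, f.dist_map]

@[simp] lemma sphereIso_coe (f : EuclideanSpace ℝ (Fin (d + 1)) ≃ₗᵢ[ℝ] EuclideanSpace ℝ (Fin (d + 1)))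
    (y : Metric.sphere (0 : EuclideanSpace ℝ (Fin (d + 1))) 1) :
    ((sphereIso f y : S) : E) = f y := rfl

variable (μ : Measure (Metric.sphere (0 : EuclideanSpace ℝ (Fin (d + 1))) 1))
  [IsProbabilityMeasure μ]

lemma integral_comp_iso (hinv : ∀ g : S ≃ᵢ S, μ.map g = μ) (e : S ≃ᵢ S) (g : S → ℝ) :
    ∫ y, g (e y) ∂μ = ∫ y, g y ∂μ := by
  have h : μ.map (e.toHomeomorph.toMeasurableEquiv) = μ := hinv e
  conv_rhs => rw [← h]
  exact (MeasureTheory.integral_map_equiv (e.toHomeomorph.toMeasurableEquiv) g).symm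

lemma const_indep (hinv : ∀ g : S ≃ᵢ S, μ.map g = μ) (u v : S) :
    ∫ y, |(inner ℝ (u : E) (y : E) : ℝ)| ∂μ = ∫ y, |(inner ℝ (v : E) (y : E) : ℝ)| ∂μ := by
  rcases eq_or_ne u v with rfl | huv
  · rfl
  · have hn : ‖(u : E)‖ = ‖(v : E)‖ := by
      rw [mem_sphere_zero_iff_norm.mp u.2, mem_sphere_zero_iff_norm.mp v.2]
    have hf : (Submodule.reflection (ℝ ∙ ((u : E) - (v : E)))ᗮ) (u : E) = v := Submodule.reflection_sub hn
    set F := Submodule.reflection (ℝ ∙ ((u : E) - (v : E)))ᗮ with hF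
    calc ∫ y, |(inner ℝ (u : E) (y : E) : ℝ)| ∂μ
        = ∫ y, |(inner ℝ (v : E) ((sphereIso F y : S) : E) : ℝ)| ∂μ := by
          congr 1; funext y
          rw [sphereIso_coe, ← hf, F.inner_map_map]
      _ = ∫ y, |(inner ℝ (v : E) (y : E) : ℝ)| ∂μ :=
          integral_comp_iso μ hinv (sphereIso F) (fun y => |(inner ℝ (v : E) (y : E) : ℝ)|)

lemma integrable_abs_inner (v : EuclideanSpace ℝ (Fin (d + 1))) :
    Integrable (fun y : S => |(inner ℝ v (y : E) : ℝ)|) μ := by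
  have hc : Continuous fun y : S => |(inner ℝ v (y : E) : ℝ)| :=
    (continuous_const.inner continuous_subtype_val).abs
  refine ⟨hc.aestronglyMeasurable, HasFiniteIntegral.of_bounded (C := ‖v‖) (ae_of_all _ fun y => ?_)⟩
  have hy : ‖(y : E)‖ = 1 := mem_sphere_zero_iff_norm.mp y.2
  calc ‖|(inner ℝ v (y : E) : ℝ)|‖ = |(inner ℝ v (y : E) : ℝ)| := by rw [Real.norm_eq_abs, abs_abs]
    _ ≤ ‖v‖ * ‖(y : E)‖ := abs_real_inner_le_norm _ _
    _ = ‖v‖ := by rw [hy, mul_one]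


lemma norm_le_sum_abs (x : EuclideanSpace ℝ (Fin (d + 1))) : ‖x‖ ≤ ∑ i, |x i| := by
  set s := ∑ i, |x i| with hs
  have hs0 : 0 ≤ s := Finset.sum_nonneg fun i _ => abs_nonneg _
  have key : ∑ i, ‖x i‖ ^ 2 ≤ s ^ 2 := by
    have h : ∀ i ∈ Finset.univ, ‖x i‖ ^ 2 ≤ |x i| * s := by
      intro i _
      rw [Real.norm_eq_abs, sq]
      exact mul_le_mul_of_nonneg_left
        (Finset.single_le_sum (f := fun j => |x j|) (fun j _ => abs_nonneg _) (Finset.mem_univ i))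
        (abs_nonneg _)
    calc ∑ i, ‖x i‖ ^ 2 ≤ ∑ i, |x i| * s := Finset.sum_le_sum h
      _ = s * s := by rw [← Finset.sum_mul]
      _ = s ^ 2 := (sq s).symm
  calc ‖x‖ = Real.sqrt (∑ i, ‖x i‖ ^ 2) := EuclideanSpace.norm_eq x
    _ ≤ Real.sqrt (s ^ 2) := Real.sqrt_le_sqrt key
    _ = s := by rw [Real.sqrt_sq hs0]

lemma const_pos (μ : Measure (Metric.sphere (0 : EuclideanSpace ℝ (Fin (d + 1))) 1))
    [IsProbabilityMeasure μ]
    (hconst : ∀ u v : S, ∫ y, |(inner ℝ (u : E) (y : E) : ℝ)| ∂μ = ∫ y, |(inner ℝ (v : E) (y : E) : ℝ)| ∂μ)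
    (x₀ : S) : 0 < ∫ y, |(inner ℝ (x₀ : E) (y : E) : ℝ)| ∂μ := by
  set c := ∫ y, |(inner ℝ (x₀ : E) (y : E) : ℝ)| ∂μ with hc
  have hmem : ∀ i : Fin (d + 1), (EuclideanSpace.single i (1 : ℝ)) ∈
      Metric.sphere (0 : EuclideanSpace ℝ (Fin (d + 1))) 1 := by
    intro i
    rw [mem_sphere_zero_iff_norm, EuclideanSpace.norm_single, norm_one]
  set e : Fin (d + 1) → S := fun i => ⟨EuclideanSpace.single i 1, hmem i⟩ with he
  have hsum : ∀ y : S, (1 : ℝ) ≤ ∑ i, |(inner ℝ ((e i : S) : E) (y : E) : ℝ)| := by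
    intro y
    have h1 : ∀ i : Fin (d + 1), (inner ℝ ((e i : S) : E) (y : E) : ℝ) = (y : E) i := by
      intro i
      simp [he, EuclideanSpace.inner_single_left]
    calc (1 : ℝ) = ‖(y : E)‖ := (mem_sphere_zero_iff_norm.mp y.2).symm
      _ ≤ ∑ i, |(y : E) i| := norm_le_sum_abs _
      _ = ∑ i, |(inner ℝ ((e i : S) : E) (y : E) : ℝ)| := by simp_rw [h1]
  have hint : (1 : ℝ) ≤ ∑ i : Fin (d + 1), ∫ y, |(inner ℝ ((e i : S) : E) (y : E) : ℝ)| ∂μ := by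
    calc (1 : ℝ) = ∫ _ : S, (1 : ℝ) ∂μ := by simp
      _ ≤ ∫ y, ∑ i, |(inner ℝ ((e i : S) : E) (y : E) : ℝ)| ∂μ := by
          refine integral_mono (integrable_const 1) ?_ hsum
          exact integrable_finset_sum _ fun i _ => integrable_abs_inner μ _
      _ = ∑ i : Fin (d + 1), ∫ y, |(inner ℝ ((e i : S) : E) (y : E) : ℝ)| ∂μ :=
          integral_finset_sum _ fun i _ => integrable_abs_inner μ _
  have heq : ∀ i : Fin (d + 1), ∫ y, |(inner ℝ ((e i : S) : E) (y : E) : ℝ)| ∂μ = c :=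
    fun i => hconst (e i) x₀
  rw [Finset.sum_congr rfl (fun i _ => heq i), Finset.sum_const, Finset.card_univ,
    Fintype.card_fin, nsmul_eq_mul] at hint
  nlinarith [hint]

lemma key (μ : Measure (Metric.sphere (0 : EuclideanSpace ℝ (Fin (d + 1))) 1))
    [IsProbabilityMeasure μ] (y₁ y₂ : Metric.sphere (0 : EuclideanSpace ℝ (Fin (d + 1))) 1) :
    (∫ r in (0:ℝ)..π,
        (1 / 2) * (μ (symmDiff
          {x : S | arccos (inner ℝ (x : E) (y₁ : E) : ℝ) < r}
          {x : S | arccos (inner ℝ (x : E) (y₂ : E) : ℝ) < r})).toReal * sin r)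
      = (1 / 2) * ∫ x : S, |(inner ℝ (x : E) (y₁ : E) : ℝ) - (inner ℝ (x : E) (y₂ : E) : ℝ)| ∂μ := by
  -- notation
  have arccos_anti : ∀ {u v : ℝ}, u ≤ v → arccos v ≤ arccos u := by
    intro u v h
    simp only [Real.arccos]
    exact sub_le_sub_left (Real.monotone_arcsin h) _
  set t₁ : S → ℝ := fun x => (inner ℝ (x : E) (y₁ : E) : ℝ) with ht₁
  set t₂ : S → ℝ := fun x => (inner ℝ (x : E) (y₂ : E) : ℝ) with ht₂
  have hbound : ∀ (y : S) (x : S), |(inner ℝ (x : E) (y : E) : ℝ)| ≤ 1 := by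
    intro y x
    have := abs_real_inner_le_norm (x : E) (y : E)
    rwa [mem_sphere_zero_iff_norm.mp x.2, mem_sphere_zero_iff_norm.mp y.2, mul_one] at this
  have hct : ∀ y : S, Continuous fun x : S => (inner ℝ (x : E) (y : E) : ℝ) :=
    fun y => continuous_subtype_val.inner continuous_const
  set A : ℝ → Set S := fun r => {x : S | arccos (t₁ x) < r} with hA
  set B : ℝ → Set S := fun r => {x : S | arccos (t₂ x) < r} with hB
  have hAm : ∀ r, MeasurableSet (A r) :=
    fun r => (isOpen_lt (Real.continuous_arccos.comp (hct y₁)) continuous_const).measurableSet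
  have hBm : ∀ r, MeasurableSet (B r) :=
    fun r => (isOpen_lt (Real.continuous_arccos.comp (hct y₂)) continuous_const).measurableSet
  set D : Set (ℝ × S) := {p | p.2 ∈ symmDiff (A p.1) (B p.1)} with hD
  have hDm : MeasurableSet D := by
    have h1 : IsOpen {p : ℝ × S | arccos (t₁ p.2) < p.1} :=
      isOpen_lt ((Real.continuous_arccos.comp (hct y₁)).comp continuous_snd) continuous_fst
    have h2 : IsOpen {p : ℝ × S | arccos (t₂ p.2) < p.1} :=
      isOpen_lt ((Real.continuous_arccos.comp (hct y₂)).comp continuous_snd) continuous_fst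
    have : D = symmDiff {p : ℝ × S | arccos (t₁ p.2) < p.1} {p : ℝ × S | arccos (t₂ p.2) < p.1} := by
      ext p
      simp only [hD, Set.mem_symmDiff, Set.mem_setOf_eq, hA, hB]
    rw [this]
    exact h1.measurableSet.symmDiff h2.measurableSet
  set F : ℝ × S → ℝ := D.indicator (fun _ => (1 : ℝ)) with hF
  -- Step A
  have stepA : ∀ r : ℝ, (μ (symmDiff (A r) (B r))).toReal = ∫ x, F (r, x) ∂μ := by
    intro r
    rw [← measureReal_def, ← integral_indicator_one ((hAm r).symmDiff (hBm r))]
    congr 1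
  -- Step B
  have stepB : ∀ x : S, (∫ r in Ioc (0:ℝ) π, F (r, x) * sin r) = |t₁ x - t₂ x| := by
    intro x
    have hm1 : -1 ≤ t₁ x := neg_le_of_abs_le (hbound y₁ x)
    have h1 : t₁ x ≤ 1 := le_of_abs_le (hbound y₁ x)
    have hm2 : -1 ≤ t₂ x := neg_le_of_abs_le (hbound y₂ x)
    have h2 : t₂ x ≤ 1 := le_of_abs_le (hbound y₂ x)
    set a := min (arccos (t₁ x)) (arccos (t₂ x)) with ha
    set b := max (arccos (t₁ x)) (arccos (t₂ x)) with hb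
    have hab : a ≤ b := min_le_max
    have h0a : 0 ≤ a := le_min (arccos_nonneg _) (arccos_nonneg _)
    have hbπ : b ≤ π := max_le (arccos_le_pi _) (arccos_le_pi _)
    have hFx : ∀ r : ℝ, F (r, x) = (Ioc a b).indicator (fun _ => (1 : ℝ)) r := by
      intro r
      have hiff : (r, x) ∈ D ↔ r ∈ Ioc a b := by
        rw [hD, Set.mem_setOf_eq, Set.mem_symmDiff]
        constructor
        · rintro (⟨hr1, hr2⟩ | ⟨hr1, hr2⟩)
          · simp only [hA, hB, Set.mem_setOf_eq] at hr1 hr2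
            refine ⟨lt_of_le_of_lt (min_le_left _ _) hr1, ?_⟩
            rcases le_or_gt r (arccos (t₂ x)) with h | h
            · exact le_trans h (le_max_right _ _)
            · exact absurd h hr2
          · simp only [hA, hB, Set.mem_setOf_eq] at hr1 hr2
            refine ⟨lt_of_le_of_lt (min_le_right _ _) hr1, ?_⟩
            rcases le_or_gt r (arccos (t₁ x)) with h | h
            · exact le_trans h (le_max_left _ _)
            · exact absurd h hr2
        · rintro ⟨hr1, hr2⟩
          rcases le_total (arccos (t₁ x)) (arccos (t₂ x)) with h | h
          · left
            rw [ha, min_eq_left h] at hr1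
            rw [hb, max_eq_right h] at hr2
            exact ⟨hr1, by simpa [hB] using not_lt.mpr hr2⟩
          · right
            rw [ha, min_eq_right h] at hr1
            rw [hb, max_eq_left h] at hr2
            exact ⟨hr1, by simpa [hA] using not_lt.mpr hr2⟩
      by_cases hr : (r, x) ∈ D
      · rw [hF, Set.indicator_of_mem hr, Set.indicator_of_mem (hiff.mp hr)]
      · rw [hF, Set.indicator_of_notMem hr, Set.indicator_of_notMem (fun h => hr (hiff.mpr h))]
    have hmul : ∀ r : ℝ, F (r, x) * sin r = (Ioc a b).indicator sin r := by
      intro r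
      rw [hFx r]
      by_cases h : r ∈ Ioc a b <;> simp [h]
    calc (∫ r in Ioc (0:ℝ) π, F (r, x) * sin r)
        = ∫ r in Ioc (0:ℝ) π, (Ioc a b).indicator sin r := by
          refine integral_congr_ae (ae_of_all _ fun r => hmul r)
      _ = ∫ r in Ioc (0:ℝ) π ∩ Ioc a b, sin r := setIntegral_indicator measurableSet_Ioc
      _ = ∫ r in Ioc a b, sin r := by
          rw [Set.Ioc_inter_Ioc, max_eq_right h0a, min_eq_right hbπ]
      _ = ∫ r in a..b, sin r := (intervalIntegral.integral_of_le hab).symm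
      _ = cos a - cos b := integral_sin
      _ = |t₁ x - t₂ x| := by
          rcases le_total (t₁ x) (t₂ x) with h | h
          · have harc : arccos (t₂ x) ≤ arccos (t₁ x) := arccos_anti h
            rw [ha, hb, min_eq_right harc, max_eq_left harc, cos_arccos hm2 h2,
              cos_arccos hm1 h1, abs_sub_comm, abs_of_nonneg (sub_nonneg.mpr h)]
          · have harc : arccos (t₁ x) ≤ arccos (t₂ x) := arccos_anti h
            rw [ha, hb, min_eq_left harc, max_eq_right harc, cos_arccos hm1 h1,
              cos_arccos hm2 h2, abs_of_nonneg (sub_nonneg.mpr h)]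
  -- integrability for Fubini
  haveI hfin : IsFiniteMeasure (volume.restrict (Ioc (0:ℝ) π)) := by
    constructor
    rw [Measure.restrict_apply_univ, Real.volume_Ioc]
    exact ENNReal.ofReal_lt_top
  have hintg : Integrable (Function.uncurry fun (r : ℝ) (x : S) => F (r, x) * sin r)
      ((volume.restrict (Ioc (0:ℝ) π)).prod μ) := by
    have hmeas : Measurable fun p : ℝ × S => F p * sin p.1 :=
      (measurable_const.indicator hDm).mul (Real.measurable_sin.comp measurable_fst)
    refine ⟨hmeas.aestronglyMeasurable, HasFiniteIntegral.of_bounded (C := 1)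
      (ae_of_all _ fun p => ?_)⟩
    show ‖F p * sin p.1‖ ≤ 1
    rw [Real.norm_eq_abs, abs_mul]
    have hF1 : |F p| ≤ 1 := by
      rw [hF]
      by_cases h : p ∈ D <;> simp [h]
    exact mul_le_one₀ hF1 (abs_nonneg _) (abs_sin_le_one _)
  -- assembly
  calc (∫ r in (0:ℝ)..π,
        (1 / 2) * (μ (symmDiff (A r) (B r))).toReal * sin r)
      = ∫ r in Ioc (0:ℝ) π, (1 / 2) * ((μ (symmDiff (A r) (B r))).toReal * sin r) := by
        rw [intervalIntegral.integral_of_le pi_pos.le]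
        congr 1; funext r; ring
    _ = (1 / 2) * ∫ r in Ioc (0:ℝ) π, (μ (symmDiff (A r) (B r))).toReal * sin r :=
        integral_const_mul _ _
    _ = (1 / 2) * ∫ r in Ioc (0:ℝ) π, ∫ x, F (r, x) * sin r ∂μ := by
        congr 1
        refine integral_congr_ae (ae_of_all _ fun r => ?_)
        dsimp only
        rw [stepA r, ← integral_mul_const]
    _ = (1 / 2) * ∫ x, (∫ r in Ioc (0:ℝ) π, F (r, x) * sin r) ∂μ := by
        congr 1
        exact integral_integral_swap hintg
    _ = (1 / 2) * ∫ x, |t₁ x - t₂ x| ∂μ := by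
        congr 1
        exact integral_congr_ae (ae_of_all _ fun x => stepB x)

end ChordalAux

open MeasureTheory Real

/-- On the unit sphere `S^d` with rotation-invariant probability measure `μ` and
geodesic metric `θ(x,y) = arccos⟨x,y⟩`, there is a constant `γ > 0`, namely
`γ = (∫_{S^d} |⟨x,y⟩| dμ(y))⁻¹` for any fixed `x` (independent of `x`), such that
the chordal metric `τ(y₁,y₂) = ‖y₁−y₂‖/2` equals `γ · θ^Δ(η♮,y₁,y₂)` with
`η♮(r) = sin r`. -/
theorem chordal_eq_gamma_symmDiff_sphere {d : ℕ}
    (μ : Measure (Metric.sphere (0 : EuclideanSpace ℝ (Fin (d + 1))) 1))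
    [IsProbabilityMeasure μ]
    (hinv : ∀ g : Metric.sphere (0 : EuclideanSpace ℝ (Fin (d + 1))) 1 ≃ᵢ
              Metric.sphere (0 : EuclideanSpace ℝ (Fin (d + 1))) 1,
      μ.map g = μ) :
    ∃ γ : ℝ, 0 < γ ∧
      (∀ x : Metric.sphere (0 : EuclideanSpace ℝ (Fin (d + 1))) 1,
        γ = (∫ y, |(inner ℝ (x : EuclideanSpace ℝ (Fin (d + 1))) (y : EuclideanSpace ℝ (Fin (d + 1))) : ℝ)| ∂μ)⁻¹) ∧
      ∀ y₁ y₂ : Metric.sphere (0 : EuclideanSpace ℝ (Fin (d + 1))) 1,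
        ‖(y₁ : EuclideanSpace ℝ (Fin (d + 1))) - (y₂ : EuclideanSpace ℝ (Fin (d + 1)))‖ / 2
          = γ * ∫ r in (0:ℝ)..π,
              (1 / 2) * (μ (symmDiff
                {x | arccos (inner ℝ (x : EuclideanSpace ℝ (Fin (d + 1))) (y₁ : EuclideanSpace ℝ (Fin (d + 1))) : ℝ) < r}
                {x | arccos (inner ℝ (x : EuclideanSpace ℝ (Fin (d + 1))) (y₂ : EuclideanSpace ℝ (Fin (d + 1))) : ℝ) < r})).toReal
              * sin r := by
  classical
  set E' := EuclideanSpace ℝ (Fin (d + 1))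
  have hconst : ∀ u v : Metric.sphere (0 : E') 1,
      ∫ y, |(inner ℝ (u : E') (y : E') : ℝ)| ∂μ = ∫ y, |(inner ℝ (v : E') (y : E') : ℝ)| ∂μ :=
    ChordalAux.const_indep μ hinv
  have hmem0 : (EuclideanSpace.single (0 : Fin (d + 1)) (1 : ℝ)) ∈ Metric.sphere (0 : E') 1 := by
    rw [mem_sphere_zero_iff_norm, EuclideanSpace.norm_single, norm_one]
  set x₀ : Metric.sphere (0 : E') 1 := ⟨_, hmem0⟩ with hx₀
  set c := ∫ y, |(inner ℝ (x₀ : E') (y : E') : ℝ)| ∂μ with hc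
  have hcpos : 0 < c := ChordalAux.const_pos μ hconst x₀
  refine ⟨c⁻¹, inv_pos.mpr hcpos, fun x => by rw [hconst x x₀], fun y₁ y₂ => ?_⟩
  rw [ChordalAux.key μ y₁ y₂]
  rcases eq_or_ne y₁ y₂ with rfl | hne
  · simp
  · have hne' : (y₁ : E') - (y₂ : E') ≠ 0 := by
      rw [sub_ne_zero]
      exact fun h => hne (Subtype.coe_injective h)
    set n : ℝ := ‖(y₁ : E') - (y₂ : E')‖ with hn
    have hnpos : 0 < n := norm_pos_iff.mpr hne'
    have humem : (n⁻¹ • ((y₁ : E') - (y₂ : E'))) ∈ Metric.sphere (0 : E') 1 := by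
      rw [mem_sphere_zero_iff_norm, norm_smul, norm_inv, Real.norm_eq_abs,
        abs_of_pos hnpos, ← hn, inv_mul_cancel₀ hnpos.ne']
    set u : Metric.sphere (0 : E') 1 := ⟨_, humem⟩ with hu
    have hrepr : (y₁ : E') - (y₂ : E') = n • (u : E') := by
      rw [hu]
      simp only
      rw [smul_smul, mul_inv_cancel₀ hnpos.ne', one_smul]
    have hpt : ∀ x : Metric.sphere (0 : E') 1,
        |(inner ℝ (x : E') (y₁ : E') : ℝ) - (inner ℝ (x : E') (y₂ : E') : ℝ)|
          = n * |(inner ℝ ((u : Metric.sphere (0 : E') 1) : E') (x : E') : ℝ)| := by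
      intro x
      rw [← inner_sub_right, hrepr, real_inner_smul_right, abs_mul, abs_of_pos hnpos,
        real_inner_comm]
    have hint : ∫ x, |(inner ℝ (x : E') (y₁ : E') : ℝ) - (inner ℝ (x : E') (y₂ : E') : ℝ)| ∂μ
        = n * c := by
      calc ∫ x, |(inner ℝ (x : E') (y₁ : E') : ℝ) - (inner ℝ (x : E') (y₂ : E') : ℝ)| ∂μ
          = ∫ x, n * |(inner ℝ ((u : Metric.sphere (0 : E') 1) : E') (x : E') : ℝ)| ∂μ :=
            integral_congr_ae (ae_of_all _ hpt)
        _ = n * ∫ x, |(inner ℝ ((u : Metric.sphere (0 : E') 1) : E') (x : E') : ℝ)| ∂μ :=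
            integral_const_mul _ _
        _ = n * c := by rw [hconst u x₀]
    rw [hint]
    field_simp
end

section
/- Stolarsky invariance principle on S^d: for any N points x₁,…,x_N on S^d, γ·λ[η♮, D_N] + Σ_{i,j} τ(x_i,x_j) = ⟨τ⟩ N², where λ[η♮,D_N] = ∫_0^π sin r ∫_{S^d} (#{B_r(y) ∩ D_N} − N v_r)² dμ(y) dr, ⟨τ⟩ = ∬ τ dμ dμ, and γ = ⟨τ⟩/⟨θ^Δ(η♮)⟩. -/
open MeasureTheory Real

noncomputable section

/-- The unit sphere `S^d ⊂ ℝ^{d+1}`. -/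
abbrev Sph (d : ℕ) := Metric.sphere (0 : EuclideanSpace ℝ (Fin (d + 1))) 1

/-- Geodesic distance on the sphere: `θ(x,y) = arccos⟨x,y⟩`. -/
def geo {d : ℕ} (x y : Sph d) : ℝ :=
  arccos (inner ℝ (x : EuclideanSpace ℝ (Fin (d + 1))) (y : EuclideanSpace ℝ (Fin (d + 1))) : ℝ)

/-- Geodesic ball of radius `r` centered at `y`. -/
def geoBall {d : ℕ} (y : Sph d) (r : ℝ) : Set (Sph d) := {x | geo x y < r}

/-- Chordal metric `τ(x,y) = ‖x − y‖/2` on the sphere. -/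
def chord {d : ℕ} (x y : Sph d) : ℝ :=
  ‖(x : EuclideanSpace ℝ (Fin (d + 1))) - (y : EuclideanSpace ℝ (Fin (d + 1)))‖ / 2

/-- Symmetric difference metric with weight `η♮(r) = sin r`. -/
def thetaDelta {d : ℕ} (μ : Measure (Sph d)) (y₁ y₂ : Sph d) : ℝ :=
  ∫ r in (0:ℝ)..π, (1 / 2) * (μ (symmDiff (geoBall y₁ r) (geoBall y₂ r))).toReal * sin r

open scoped ENNReal

namespace StolAux
variable {d : ℕ}
local notation "E'" => EuclideanSpace ℝ (Fin (d + 1))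
lemma norm_sph (x : Sph d) : ‖(x : E')‖ = 1 := norm_eq_of_mem_sphere x

lemma inner_sph_le_one (x y : Sph d) : |(inner ℝ (x:E') (y:E') : ℝ)| ≤ 1 := by
  have := abs_real_inner_le_norm (x:E') (y:E')
  rwa [norm_sph, norm_sph, mul_one] at this

lemma geo_symm (x y : Sph d) : geo x y = geo y x := by
  unfold geo; rw [real_inner_comm]

lemma geo_nonneg (x y : Sph d) : 0 ≤ geo x y := Real.arccos_nonneg _
lemma geo_le_pi (x y : Sph d) : geo x y ≤ π := Real.arccos_le_pi _

lemma cos_geo (x y : Sph d) : Real.cos (geo x y) = (inner ℝ (x:E') (y:E') : ℝ) := by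
  have h := inner_sph_le_one x y
  rw [abs_le] at h
  exact Real.cos_arccos h.1 h.2

lemma continuous_geo_fst (x : Sph d) : Continuous fun z : Sph d => geo z x := by
  unfold geo
  exact Real.continuous_arccos.comp (continuous_subtype_val.inner continuous_const)

lemma isOpen_geoBall (y : Sph d) (r : ℝ) : IsOpen (geoBall y r) :=
  isOpen_lt (continuous_geo_fst y) continuous_const

lemma measurableSet_geoBall (y : Sph d) (r : ℝ) : MeasurableSet (geoBall y r) :=
  (isOpen_geoBall y r).measurableSet

lemma mem_geoBall {x y : Sph d} {r : ℝ} : x ∈ geoBall y r ↔ geo x y < r := Iff.rfl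

lemma mem_symmDiff_geoBall {x y z : Sph d} {r : ℝ} :
    z ∈ symmDiff (geoBall x r) (geoBall y r) ↔
      r ∈ Set.Ioc (min (geo z x) (geo z y)) (max (geo z x) (geo z y)) := by
  rw [Set.mem_symmDiff]
  simp only [mem_geoBall, Set.mem_Ioc, lt_min_iff, min_lt_iff, le_max_iff]
  constructor
  · rintro (⟨h1, h2⟩ | ⟨h1, h2⟩)
    · exact ⟨Or.inl h1, Or.inr (le_of_not_gt h2)⟩
    · exact ⟨Or.inr h1, Or.inl (le_of_not_gt h2)⟩
  · rintro ⟨h1 | h1, h2 | h2⟩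
    · exact absurd h2 (not_le.mpr h1)
    · exact Or.inl ⟨h1, not_lt.mpr h2⟩
    · exact Or.inr ⟨h1, not_lt.mpr h2⟩
    · exact absurd h2 (not_le.mpr h1)

/-- Isometry of the sphere induced by a linear isometry of the ambient space. -/
def sphMap (f : E' ≃ₗᵢ[ℝ] E') : Sph d ≃ᵢ Sph d where
  toFun z := ⟨f z, by
    rw [mem_sphere_iff_norm, sub_zero, f.norm_map]; exact norm_eq_of_mem_sphere z⟩
  invFun z := ⟨f.symm z, by
    rw [mem_sphere_iff_norm, sub_zero, f.symm.norm_map]; exact norm_eq_of_mem_sphere z⟩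
  left_inv z := by ext1; simp
  right_inv z := by ext1; simp
  isometry_toFun := by
    apply Isometry.of_dist_eq
    intro a b
    show dist (f a : E') (f b) = dist (a : E') b
    exact f.isometry.dist_eq _ _

lemma sphMap_coe (f : E' ≃ₗᵢ[ℝ] E') (z : Sph d) : ((sphMap f z : Sph d) : E') = f z := rfl

/-- The radial integral of the weight over an interval. -/
lemma rInt {a b : ℝ} (ha : 0 ≤ a) (ha' : a ≤ π) (hb : 0 ≤ b) (hb' : b ≤ π) :
    ∫ r in Set.Ioc (0:ℝ) π,
        (Set.Ioc (min a b) (max a b)).indicator (fun _ => (1:ℝ)) r * ((1/2) * sin r)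
      = (1/2) * |cos a - cos b| := by
  have h1 : ∀ r, (Set.Ioc (min a b) (max a b)).indicator (fun _ => (1:ℝ)) r * ((1/2) * sin r)
      = (Set.Ioc (min a b) (max a b)).indicator (fun r => (1/2) * sin r) r := by
    intro r; by_cases h : r ∈ Set.Ioc (min a b) (max a b) <;> simp [h]
  simp_rw [h1]
  rw [setIntegral_indicator measurableSet_Ioc]
  have hmin : 0 ≤ min a b := le_min ha hb
  have hmax : max a b ≤ π := max_le ha' hb'
  have hset : Set.Ioc (0:ℝ) π ∩ Set.Ioc (min a b) (max a b) = Set.Ioc (min a b) (max a b) := by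
    rw [Set.Ioc_inter_Ioc, max_eq_right hmin, min_eq_right hmax]
  rw [hset, ← intervalIntegral.integral_of_le (min_le_max)]
  rw [intervalIntegral.integral_const_mul, integral_sin]
  rcases le_total a b with h | h
  · rw [min_eq_left h, max_eq_right h, abs_of_nonneg
      (by linarith [Real.cos_le_cos_of_nonneg_of_le_pi ha hb' h] : (0:ℝ) ≤ cos a - cos b)]
  · rw [min_eq_right h, max_eq_left h, abs_of_nonpos
      (by linarith [Real.cos_le_cos_of_nonneg_of_le_pi hb ha' h] : cos a - cos b ≤ 0)]
    ring



instance : IsFiniteMeasure (volume.restrict (Set.Ioc (0:ℝ) π)) := by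
  constructor
  rw [Measure.restrict_apply_univ, Real.volume_Ioc]
  exact ENNReal.ofReal_lt_top

/-- Kernel representation of `thetaDelta`. -/
lemma thetaDelta_kernel (μ : Measure (Sph d)) [IsProbabilityMeasure μ] (x y : Sph d) :
    thetaDelta μ x y = ∫ z, (1/2) * |(inner ℝ (z:E') ((x:E') - (y:E')) : ℝ)| ∂μ := by
  classical
  set f : ℝ → Sph d → ℝ := fun r z =>
    (Set.Ioc (min (geo z x) (geo z y)) (max (geo z x) (geo z y))).indicator
      (fun _ => (1:ℝ)) r * ((1/2) * sin r) with hf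
  have hsd : ∀ r : ℝ, MeasurableSet (symmDiff (geoBall x r) (geoBall y r)) := fun r =>
    ((measurableSet_geoBall x r).diff (measurableSet_geoBall y r)).union
      ((measurableSet_geoBall y r).diff (measurableSet_geoBall x r))
  have hstep : ∀ r : ℝ,
      (1/2) * (μ (symmDiff (geoBall x r) (geoBall y r))).toReal * sin r = ∫ z, f r z ∂μ := by
    intro r
    calc (1/2) * (μ (symmDiff (geoBall x r) (geoBall y r))).toReal * sin r
        = (∫ z, (symmDiff (geoBall x r) (geoBall y r)).indicator (fun _ => (1:ℝ)) z ∂μ)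
            * ((1/2) * sin r) := by
          rw [show ((symmDiff (geoBall x r) (geoBall y r)).indicator (fun _ => (1:ℝ)))
              = (symmDiff (geoBall x r) (geoBall y r)).indicator 1 from rfl,
            integral_indicator_one (hsd r), measureReal_def]
          ring
      _ = ∫ z, (symmDiff (geoBall x r) (geoBall y r)).indicator (fun _ => (1:ℝ)) z
            * ((1/2) * sin r) ∂μ := (integral_mul_const _ _).symm
      _ = ∫ z, f r z ∂μ := by
          apply integral_congr_ae; filter_upwards with z
          simp only [hf]
          congr 1
          by_cases hz : z ∈ symmDiff (geoBall x r) (geoBall y r)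
          · rw [Set.indicator_of_mem hz, Set.indicator_of_mem (mem_symmDiff_geoBall.mp hz)]
          · rw [Set.indicator_of_notMem hz,
              Set.indicator_of_notMem (fun hr => hz (mem_symmDiff_geoBall.mpr hr))]
  have hQ : MeasurableSet {p : ℝ × Sph d |
      min (geo p.2 x) (geo p.2 y) < p.1 ∧ p.1 ≤ max (geo p.2 x) (geo p.2 y)} := by
    apply MeasurableSet.inter
    · exact measurableSet_lt
        (((continuous_geo_fst x).comp continuous_snd).min
          ((continuous_geo_fst y).comp continuous_snd)).measurable measurable_fst
    · exact measurableSet_le measurable_fst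
        (((continuous_geo_fst x).comp continuous_snd).max
          ((continuous_geo_fst y).comp continuous_snd)).measurable
  have huncurry : Function.uncurry f = fun p : ℝ × Sph d =>
      ({p : ℝ × Sph d | min (geo p.2 x) (geo p.2 y) < p.1
          ∧ p.1 ≤ max (geo p.2 x) (geo p.2 y)}).indicator
        (fun p => (1/2) * sin p.1) p := by
    funext p
    show f p.1 p.2 = _
    simp only [hf]
    by_cases hp : p ∈ {p : ℝ × Sph d | min (geo p.2 x) (geo p.2 y) < p.1
        ∧ p.1 ≤ max (geo p.2 x) (geo p.2 y)}
    · rw [Set.indicator_of_mem hp,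
        Set.indicator_of_mem (Set.mem_Ioc.mpr hp), one_mul]
    · rw [Set.indicator_of_notMem hp,
        Set.indicator_of_notMem (fun h => hp (Set.mem_Ioc.mp h)), zero_mul]
  have hint : Integrable (Function.uncurry f) ((volume.restrict (Set.Ioc (0:ℝ) π)).prod μ) := by
    apply Integrable.mono' (integrable_const (1:ℝ))
    · rw [huncurry]
      exact ((measurable_sin.comp measurable_fst).const_mul (1/2)).indicator hQ
        |>.aestronglyMeasurable
    · filter_upwards with p
      rw [huncurry]
      simp only [Set.indicator]
      split
      · rw [Real.norm_eq_abs, abs_mul, abs_of_nonneg (by norm_num : (0:ℝ) ≤ 1/2)]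
        calc (1/2) * |sin p.1| ≤ (1/2) * 1 := by
              have := abs_sin_le_one p.1  -- guess
              nlinarith [abs_nonneg (sin p.1)]
          _ ≤ 1 := by norm_num
      · simp
  calc thetaDelta μ x y
      = ∫ r in Set.Ioc (0:ℝ) π, (∫ z, f r z ∂μ) := by
        unfold thetaDelta
        rw [intervalIntegral.integral_of_le Real.pi_pos.le]
        exact setIntegral_congr_ae measurableSet_Ioc (by filter_upwards with r _; exact hstep r)
    _ = ∫ z, (∫ r in Set.Ioc (0:ℝ) π, f r z) ∂μ := integral_integral_swap hint
    _ = ∫ z, (1/2) * |(inner ℝ (z:E') ((x:E') - (y:E') ): ℝ)| ∂μ := by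
        apply integral_congr_ae; filter_upwards with z
        rw [hf]
        rw [rInt (geo_nonneg z x) (geo_le_pi z x) (geo_nonneg z y) (geo_le_pi z y)]
        rw [cos_geo, cos_geo, ← inner_sub_right]



lemma integrable_of_continuous (μ : Measure (Sph d)) [IsFiniteMeasure μ]
    {g : Sph d → ℝ} (hg : Continuous g) : Integrable g μ :=
  hg.integrable_of_hasCompactSupport (HasCompactSupport.of_compactSpace g)

/-- change of variables along a sphere isometry -/
lemma integral_comp_sphMap (μ : Measure (Sph d)) [IsProbabilityMeasure μ]
    (hinv : ∀ g : Sph d ≃ᵢ Sph d, μ.map g = μ) (f : E' ≃ₗᵢ[ℝ] E') {g : Sph d → ℝ}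
    (hg : Continuous g) :
    ∫ z, g z ∂μ = ∫ z, g (sphMap f z) ∂μ := by
  conv_lhs => rw [← hinv (sphMap f)]
  exact integral_map (sphMap f).toHomeomorph.continuous.measurable.aemeasurable
    hg.aestronglyMeasurable

def e0 : E' := EuclideanSpace.single (0 : Fin (d+1)) (1:ℝ)

lemma norm_e0 : ‖(e0 : E')‖ = 1 := by
  rw [show (e0 : E') = EuclideanSpace.single (0 : Fin (d+1)) (1:ℝ) from rfl,
    EuclideanSpace.norm_single]
  norm_num

lemma continuous_abs_inner (w : E') :
    Continuous (fun z : Sph d => |(inner ℝ (z:E') w : ℝ)|) :=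
  (continuous_subtype_val.inner continuous_const).abs

/-- the average |⟨z,u⟩| is the same for all unit u -/
lemma eta_const (μ : Measure (Sph d)) [IsProbabilityMeasure μ]
    (hinv : ∀ g : Sph d ≃ᵢ Sph d, μ.map g = μ) (u : E') (hu : ‖u‖ = 1) :
    ∫ z, |(inner ℝ (z:E') u : ℝ)| ∂μ = ∫ z, |(inner ℝ (z:E') (e0 : E') : ℝ)| ∂μ := by
  set f := Submodule.reflection (Submodule.span ℝ {(e0 : E') - u})ᗮ with hfdef
  have hfe : f (e0 : E') = u := Submodule.reflection_sub (by rw [norm_e0, hu])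
  rw [integral_comp_sphMap μ hinv f (continuous_abs_inner u)]
  apply integral_congr_ae; filter_upwards with z
  rw [sphMap_coe, ← hfe, LinearIsometryEquiv.inner_map_map]

lemma eta_norm (μ : Measure (Sph d)) [IsProbabilityMeasure μ]
    (hinv : ∀ g : Sph d ≃ᵢ Sph d, μ.map g = μ) (w : E') :
    ∫ z, |(inner ℝ (z:E') w : ℝ)| ∂μ = ‖w‖ * ∫ z, |(inner ℝ (z:E') (e0 : E') : ℝ)| ∂μ := by
  by_cases hw : w = 0
  · simp [hw]
  · have hnw : (0:ℝ) < ‖w‖ := norm_pos_iff.mpr hw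
    have hu : ‖(‖w‖⁻¹ • w : E')‖ = 1 := by
      rw [norm_smul, norm_inv, norm_norm, inv_mul_cancel₀ hnw.ne']
    have hw' : w = ‖w‖ • (‖w‖⁻¹ • w : E') := by
      rw [smul_smul, mul_inv_cancel₀ hnw.ne', one_smul]
    calc ∫ z, |(inner ℝ (z:E') w : ℝ)| ∂μ
        = ∫ z, ‖w‖ * |(inner ℝ (z:E') (‖w‖⁻¹ • w : E') : ℝ)| ∂μ := by
          apply integral_congr_ae; filter_upwards with z
          conv_lhs => rw [hw']
          rw [real_inner_smul_right, abs_mul, abs_of_pos hnw]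
      _ = ‖w‖ * ∫ z, |(inner ℝ (z:E') (‖w‖⁻¹ • w : E') : ℝ)| ∂μ := integral_const_mul _ _
      _ = ‖w‖ * ∫ z, |(inner ℝ (z:E') (e0:E') : ℝ)| ∂μ := by
          rw [eta_const μ hinv _ hu]

/-- thetaDelta is proportional to chord -/
lemma thetaDelta_eq_chord (μ : Measure (Sph d)) [IsProbabilityMeasure μ]
    (hinv : ∀ g : Sph d ≃ᵢ Sph d, μ.map g = μ) (x y : Sph d) :
    thetaDelta μ x y = (∫ z, |(inner ℝ (z:E') (e0 : E') : ℝ)| ∂μ) * chord x y := by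
  rw [thetaDelta_kernel μ x y, integral_const_mul, eta_norm μ hinv]
  unfold chord
  ring

/-- positivity of κ -/
lemma kappa_pos (μ : Measure (Sph d)) [IsProbabilityMeasure μ]
    (hinv : ∀ g : Sph d ≃ᵢ Sph d, μ.map g = μ) :
    0 < ∫ z, |(inner ℝ (z:E') (e0 : E') : ℝ)| ∂μ := by
  set κ := ∫ z, |(inner ℝ (z:E') (e0 : E') : ℝ)| ∂μ with hκ
  have hcont : ∀ i : Fin (d+1), Continuous (fun z : Sph d => |((z:E') i)|) := fun i =>
    (((EuclideanSpace.proj i) : E' →L[ℝ] ℝ).continuous.comp continuous_subtype_val).abs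
  have hcoord : ∀ i : Fin (d+1), ∫ z : Sph d, |((z:E') i)| ∂μ = κ := by
    intro i
    have h1 : ‖(EuclideanSpace.single i (1:ℝ) : E')‖ = 1 := by
      rw [EuclideanSpace.norm_single]; norm_num
    rw [hκ, ← eta_const μ hinv (EuclideanSpace.single i (1:ℝ)) h1]
    apply integral_congr_ae; filter_upwards with z
    congr 1
    rw [EuclideanSpace.inner_single_right]; simp
  have hsq : ∀ z : Sph d, ∑ i : Fin (d+1), ((z:E') i)^2 = 1 := by
    intro z
    have h2 : ‖(z:E')‖^2 = ∑ i, ‖(z:E') i‖^2 := by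
      rw [EuclideanSpace.norm_eq, Real.sq_sqrt (by positivity)]
    rw [norm_sph, one_pow] at h2
    simp only [Real.norm_eq_abs, sq_abs] at h2
    exact h2.symm
  have hle : ∀ z : Sph d, (1:ℝ) ≤ ∑ i : Fin (d+1), |((z:E') i)| := by
    intro z
    calc (1:ℝ) = ∑ i : Fin (d+1), ((z:E') i)^2 := (hsq z).symm
      _ ≤ ∑ i : Fin (d+1), |((z:E') i)| := by
          apply Finset.sum_le_sum
          intro i _
          have hb : ((z:E') i)^2 ≤ 1 := by
            have := Finset.single_le_sum (f := fun j => ((z:E') j)^2)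
              (fun j _ => sq_nonneg _) (Finset.mem_univ i)
            rw [hsq z] at this; exact this
          nlinarith [abs_nonneg ((z:E') i), sq_abs ((z:E') i)]
  have key : (1:ℝ) ≤ ((d:ℝ)+1) * κ := by
    have h3 : ∫ (_ : Sph d), (1:ℝ) ∂μ ≤ ∫ z : Sph d, ∑ i : Fin (d+1), |((z:E') i)| ∂μ := by
      apply integral_mono (integrable_const 1)
      · exact integrable_of_continuous μ (by continuity)
      · exact hle
    rw [integral_const, probReal_univ, smul_eq_mul, mul_one] at h3
    rw [integral_finset_sum _ (fun i _ => integrable_of_continuous μ (hcont i))] at h3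
    simp only [hcoord] at h3
    rw [Finset.sum_const, Finset.card_univ, Fintype.card_fin, nsmul_eq_mul] at h3
    calc (1:ℝ) ≤ (↑(d+1)) * κ := h3
      _ = ((d:ℝ)+1) * κ := by push_cast; ring
  nlinarith [key, Nat.cast_nonneg (α := ℝ) d]



lemma integral_inner_zero (μ : Measure (Sph d)) [IsProbabilityMeasure μ]
    (hinv : ∀ g : Sph d ≃ᵢ Sph d, μ.map g = μ) (x : Sph d) :
    ∫ y : Sph d, (inner ℝ (x:E') (y:E') : ℝ) ∂μ = 0 := by
  have h := integral_comp_sphMap μ hinv (LinearIsometryEquiv.neg ℝ)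
    (g := fun y : Sph d => (inner ℝ (x:E') (y:E') : ℝ))
    (continuous_const.inner continuous_subtype_val)
  have h2 : ∀ y : Sph d,
      (inner ℝ (x:E') ((sphMap (LinearIsometryEquiv.neg ℝ) y : Sph d) : E') : ℝ)
        = - (inner ℝ (x:E') (y:E') : ℝ) := by
    intro y
    rw [sphMap_coe]
    simp [inner_neg_right]
  rw [show (fun y : Sph d => (inner ℝ (x:E') ((sphMap (LinearIsometryEquiv.neg ℝ) y : Sph d) : E') : ℝ))
      = fun y : Sph d => - (inner ℝ (x:E') (y:E') : ℝ) from funext h2] at h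
  rw [integral_neg] at h
  linarith

lemma continuous_chord (x : Sph d) : Continuous (fun y : Sph d => chord x y) := by
  unfold chord
  exact ((continuous_const.sub continuous_subtype_val).norm).div_const 2

lemma chord_nonneg (x y : Sph d) : 0 ≤ chord x y := by
  unfold chord; positivity

lemma integral_chord_ge (μ : Measure (Sph d)) [IsProbabilityMeasure μ]
    (hinv : ∀ g : Sph d ≃ᵢ Sph d, μ.map g = μ) (x : Sph d) :
    (1/2 : ℝ) ≤ ∫ y, chord x y ∂μ := by
  have hpt : ∀ y : Sph d, (1 - (inner ℝ (x:E') (y:E') : ℝ))/2 ≤ chord x y := by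
    intro y
    have h1 : (inner ℝ (x:E') ((x:E') - (y:E')) : ℝ) ≤ ‖(x:E') - (y:E')‖ := by
      calc (inner ℝ (x:E') ((x:E') - (y:E')) : ℝ) ≤ ‖(x:E')‖ * ‖(x:E') - (y:E')‖ :=
            real_inner_le_norm _ _
        _ = ‖(x:E') - (y:E')‖ := by rw [norm_sph, one_mul]
    have h2 : (inner ℝ (x:E') ((x:E') - (y:E')) : ℝ) = 1 - (inner ℝ (x:E') (y:E') : ℝ) := by
      rw [inner_sub_right, real_inner_self_eq_norm_sq, norm_sph]; norm_num
    unfold chord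
    rw [h2] at h1
    linarith
  have hInt1 : Integrable (fun y : Sph d => (1 - (inner ℝ (x:E') (y:E') : ℝ))/2) μ :=
    integrable_of_continuous μ (by
      exact ((continuous_const.sub (continuous_const.inner continuous_subtype_val)).div_const 2))
  have h3 : ∫ y, (1 - (inner ℝ (x:E') (y:E') : ℝ))/2 ∂μ ≤ ∫ y, chord x y ∂μ :=
    integral_mono hInt1 (integrable_of_continuous μ (continuous_chord x)) hpt
  have h4 : ∫ y, (1 - (inner ℝ (x:E') (y:E') : ℝ))/2 ∂μ = 1/2 := by
    have : (fun y : Sph d => (1 - (inner ℝ (x:E') (y:E') : ℝ))/2)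
        = fun y : Sph d => 1/2 - (inner ℝ (x:E') (y:E') : ℝ)/2 := by funext y; ring
    rw [this, integral_sub (integrable_const _)
      ((integrable_of_continuous μ (continuous_const.inner continuous_subtype_val)).div_const 2)]
    rw [integral_div, integral_div, integral_inner_zero μ hinv x, integral_const, probReal_univ]
    norm_num
  linarith



/-- intersection kernel -/
def Kk (μ : Measure (Sph d)) (r : ℝ) (x y : Sph d) : ℝ :=
  (μ (geoBall x r ∩ geoBall y r)).toReal

lemma half_symmDiff (μ : Measure (Sph d)) [IsProbabilityMeasure μ]
    {v : ℝ → ℝ} (hv : ∀ (y : Sph d) (r : ℝ), (μ (geoBall y r)).toReal = v r)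
    (r : ℝ) (x y : Sph d) :
    (1/2 : ℝ) * (μ (symmDiff (geoBall x r) (geoBall y r))).toReal = v r - Kk μ r x y := by
  set A := geoBall x r
  set B := geoBall y r
  have hBmeas := measurableSet_geoBall y r
  have hAmeas := measurableSet_geoBall x r
  have h1 : (μ (A ∩ B)).toReal + (μ (A \ B)).toReal = v r := by
    rw [← ENNReal.toReal_add (measure_ne_top μ _) (measure_ne_top μ _),
      measure_inter_add_diff A hBmeas]
    exact hv x r
  have h2 : (μ (B ∩ A)).toReal + (μ (B \ A)).toReal = v r := by
    rw [← ENNReal.toReal_add (measure_ne_top μ _) (measure_ne_top μ _),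
      measure_inter_add_diff B hAmeas]
    exact hv y r
  have h3 : μ (symmDiff A B) = μ (A \ B) + μ (B \ A) := by
    rw [Set.symmDiff_def]
    exact measure_union (disjoint_sdiff_sdiff) (hBmeas.diff hAmeas)
  have h4 : (μ (symmDiff A B)).toReal = (μ (A \ B)).toReal + (μ (B \ A)).toReal := by
    rw [h3, ENNReal.toReal_add (measure_ne_top μ _) (measure_ne_top μ _)]
  have h5 : (μ (B ∩ A)).toReal = Kk μ r x y := by
    rw [Set.inter_comm]; rfl
  have h6 : (μ (A ∩ B)).toReal = Kk μ r x y := rfl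
  rw [h4]
  rw [h5] at h2
  rw [h6] at h1
  linarith

lemma Kk_mono (μ : Measure (Sph d)) [IsProbabilityMeasure μ] (x y : Sph d) :
    Monotone (fun r => Kk μ r x y) := by
  intro r s hrs
  apply ENNReal.toReal_mono (measure_ne_top μ _)
  apply measure_mono
  exact Set.inter_subset_inter (fun z hz => lt_of_lt_of_le hz hrs)
    (fun z hz => lt_of_lt_of_le hz hrs)

lemma Kk_nonneg (μ : Measure (Sph d)) (r : ℝ) (x y : Sph d) : 0 ≤ Kk μ r x y :=
  ENNReal.toReal_nonneg

lemma Kk_le_one (μ : Measure (Sph d)) [IsProbabilityMeasure μ] (r : ℝ) (x y : Sph d) :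
    Kk μ r x y ≤ 1 := by
  have := prob_le_one (μ := μ) (s := geoBall x r ∩ geoBall y r)
  calc Kk μ r x y ≤ (1 : ℝ≥0∞).toReal := ENNReal.toReal_mono (by simp) this
    _ = 1 := by simp

/-- the sphere has a point -/
def x₀ : Sph d := ⟨e0, by rw [mem_sphere_iff_norm, sub_zero]; exact norm_e0⟩

lemma v_eq (μ : Measure (Sph d)) {v : ℝ → ℝ}
    (hv : ∀ (y : Sph d) (r : ℝ), (μ (geoBall y r)).toReal = v r) (r : ℝ) :
    v r = (μ (geoBall (x₀ : Sph d) r)).toReal := (hv x₀ r).symm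

lemma v_mono (μ : Measure (Sph d)) [IsProbabilityMeasure μ] {v : ℝ → ℝ}
    (hv : ∀ (y : Sph d) (r : ℝ), (μ (geoBall y r)).toReal = v r) : Monotone v := by
  intro r s hrs
  rw [v_eq μ hv r, v_eq μ hv s]
  apply ENNReal.toReal_mono (measure_ne_top μ _)
  exact measure_mono (fun z hz => lt_of_lt_of_le hz hrs)

lemma v_nonneg (μ : Measure (Sph d)) {v : ℝ → ℝ}
    (hv : ∀ (y : Sph d) (r : ℝ), (μ (geoBall y r)).toReal = v r) (r : ℝ) : 0 ≤ v r := by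
  rw [v_eq μ hv r]; exact ENNReal.toReal_nonneg

lemma v_le_one (μ : Measure (Sph d)) [IsProbabilityMeasure μ] {v : ℝ → ℝ}
    (hv : ∀ (y : Sph d) (r : ℝ), (μ (geoBall y r)).toReal = v r) (r : ℝ) : v r ≤ 1 := by
  rw [v_eq μ hv r]
  calc (μ (geoBall (x₀ : Sph d) r)).toReal ≤ (1 : ℝ≥0∞).toReal :=
      ENNReal.toReal_mono (by simp) (prob_le_one)
    _ = 1 := by simp

lemma ii_of_meas_bdd {f : ℝ → ℝ} (hm : Measurable f) (hb : ∀ r, |f r| ≤ 1) :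
    IntervalIntegrable f volume 0 π := by
  rw [intervalIntegrable_iff_integrableOn_Ioc_of_le Real.pi_pos.le]
  apply Integrable.mono' (integrable_const (1:ℝ)) hm.aestronglyMeasurable
  filter_upwards with r
  simpa using hb r



lemma indicator_swap (r : ℝ) (y z : Sph d) :
    (geoBall y r).indicator (fun _ => (1:ℝ)) z = (geoBall z r).indicator (fun _ => (1:ℝ)) y := by
  by_cases h : z ∈ geoBall y r
  · rw [Set.indicator_of_mem h, Set.indicator_of_mem (by
      rw [mem_geoBall, geo_symm]; exact mem_geoBall.mp h)]
  · rw [Set.indicator_of_notMem h, Set.indicator_of_notMem (by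
      rw [mem_geoBall, geo_symm]; exact fun hc => h (mem_geoBall.mpr hc))]

lemma indicator_mul (s t : Set (Sph d)) (y : Sph d) :
    s.indicator (fun _ => (1:ℝ)) y * t.indicator (fun _ => (1:ℝ)) y
      = (s ∩ t).indicator (fun _ => (1:ℝ)) y := by
  by_cases hs : y ∈ s <;> by_cases ht : y ∈ t <;>
    simp [Set.indicator_apply, hs, ht, Set.mem_inter_iff]

lemma integrable_indicator_one (μ : Measure (Sph d)) [IsProbabilityMeasure μ]
    {s : Set (Sph d)} (hs : MeasurableSet s) :
    Integrable (s.indicator (fun _ => (1:ℝ))) μ := by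
  apply Integrable.indicator (integrable_const 1) hs

/-- expansion of the quadratic discrepancy -/
lemma Fexp (μ : Measure (Sph d)) [IsProbabilityMeasure μ]
    {v : ℝ → ℝ} (hv : ∀ (y : Sph d) (r : ℝ), (μ (geoBall y r)).toReal = v r)
    {N : ℕ} (D : Fin N → Sph d) (r : ℝ) :
    (∫ y, ((∑ i, (geoBall y r).indicator (fun _ => (1 : ℝ)) (D i))
        - (N : ℝ) * v r) ^ 2 ∂μ)
      = (∑ i, ∑ j, Kk μ r (D i) (D j)) - (N:ℝ)^2 * (v r)^2 := by
  classical
  set g : Fin N → Sph d → ℝ := fun i => (geoBall (D i) r).indicator (fun _ => (1:ℝ)) with hg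
  set c : ℝ := (N : ℝ) * v r with hc
  have hmeas : ∀ i, MeasurableSet (geoBall (D i) r) := fun i => measurableSet_geoBall _ _
  have hpt : ∀ y : Sph d,
      ((∑ i, (geoBall y r).indicator (fun _ => (1 : ℝ)) (D i)) - (N : ℝ) * v r) ^ 2
        = (∑ i, ∑ j, ((geoBall (D i) r ∩ geoBall (D j) r).indicator (fun _ => (1:ℝ)) y))
            - 2 * c * (∑ i, g i y) + c^2 := by
    intro y
    have h1 : ∀ i, (geoBall y r).indicator (fun _ => (1:ℝ)) (D i) = g i y := fun i =>
      indicator_swap r y (D i)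
    simp only [h1]
    have h2 : ((∑ i, g i y) - c)^2 = (∑ i, g i y) * (∑ j, g j y) - 2 * c * (∑ i, g i y) + c^2 := by
      ring
    rw [h2, Finset.sum_mul_sum]
    congr 1
    congr 1
    apply Finset.sum_congr rfl; intro i _
    apply Finset.sum_congr rfl; intro j _
    exact indicator_mul _ _ y
  have hInt1 : Integrable (fun y => ∑ i, ∑ j,
      ((geoBall (D i) r ∩ geoBall (D j) r).indicator (fun _ => (1:ℝ)) y)) μ := by
    apply integrable_finset_sum; intro i _
    apply integrable_finset_sum; intro j _
    exact integrable_indicator_one μ ((hmeas i).inter (hmeas j))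
  have hInt2 : Integrable (fun y => ∑ i, g i y) μ := by
    apply integrable_finset_sum; intro i _
    exact integrable_indicator_one μ (hmeas i)
  calc (∫ y, ((∑ i, (geoBall y r).indicator (fun _ => (1 : ℝ)) (D i)) - (N : ℝ) * v r) ^ 2 ∂μ)
      = ∫ y, ((∑ i, ∑ j, ((geoBall (D i) r ∩ geoBall (D j) r).indicator (fun _ => (1:ℝ)) y))
          - 2 * c * (∑ i, g i y) + c^2) ∂μ := by
        apply integral_congr_ae; filter_upwards with y; exact hpt y
    _ = (∫ y, (∑ i, ∑ j, ((geoBall (D i) r ∩ geoBall (D j) r).indicator (fun _ => (1:ℝ)) y)) ∂μ)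
          - 2 * c * (∫ y, (∑ i, g i y) ∂μ) + c^2 := by
        have hsub : Integrable (fun y =>
            (∑ i, ∑ j, ((geoBall (D i) r ∩ geoBall (D j) r).indicator (fun _ => (1:ℝ)) y))
              - 2 * c * (∑ i, g i y)) μ := hInt1.sub (hInt2.const_mul _)
        rw [integral_add hsub (integrable_const _),
          integral_sub hInt1 (hInt2.const_mul _), integral_const_mul, integral_const,
          probReal_univ]
        simp
    _ = (∑ i, ∑ j, Kk μ r (D i) (D j)) - (N:ℝ)^2 * (v r)^2 := by
        have h1 : (∫ y, (∑ i, ∑ j,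
            ((geoBall (D i) r ∩ geoBall (D j) r).indicator (fun _ => (1:ℝ)) y)) ∂μ)
            = ∑ i, ∑ j, Kk μ r (D i) (D j) := by
          rw [integral_finset_sum _ (fun i _ => integrable_finset_sum _
            (fun j _ => integrable_indicator_one μ ((hmeas i).inter (hmeas j))))]
          apply Finset.sum_congr rfl; intro i _
          rw [integral_finset_sum _
            (fun j _ => integrable_indicator_one μ ((hmeas i).inter (hmeas j)))]
          apply Finset.sum_congr rfl; intro j _
          rw [show ((geoBall (D i) r ∩ geoBall (D j) r).indicator (fun _ => (1:ℝ)))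
              = (geoBall (D i) r ∩ geoBall (D j) r).indicator 1 from rfl,
            integral_indicator_one ((hmeas i).inter (hmeas j))]
          rfl
        have h2 : (∫ y, (∑ i, g i y) ∂μ) = (N : ℝ) * v r := by
          rw [integral_finset_sum _ (fun i _ => integrable_indicator_one μ (hmeas i))]
          have : ∀ i : Fin N, (∫ y, g i y ∂μ) = v r := by
            intro i
            simp only [hg]
            rw [show ((geoBall (D i) r).indicator (fun _ => (1:ℝ)))
                = (geoBall (D i) r).indicator 1 from rfl,
              integral_indicator_one (hmeas i)]
            exact hv (D i) r
          simp only [hg] at this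
          simp only [this, Finset.sum_const, Finset.card_univ, Fintype.card_fin, nsmul_eq_mul]
        rw [h1, h2, hc]
        ring


lemma continuous_geo₂ : Continuous fun p : Sph d × Sph d => geo p.1 p.2 := by
  unfold geo
  exact Real.continuous_arccos.comp
    ((continuous_subtype_val.comp continuous_fst).inner (continuous_subtype_val.comp continuous_snd))

lemma thetaDelta_r (μ : Measure (Sph d)) [IsProbabilityMeasure μ]
    {v : ℝ → ℝ} (hv : ∀ (y : Sph d) (r : ℝ), (μ (geoBall y r)).toReal = v r) (x y : Sph d) :
    thetaDelta μ x y = ∫ r in (0:ℝ)..π, (v r - Kk μ r x y) * sin r := by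
  unfold thetaDelta
  apply intervalIntegral.integral_congr
  intro r _
  exact congrArg (· * sin r) (half_symmDiff μ hv r x y)

lemma measurable_v (μ : Measure (Sph d)) [IsProbabilityMeasure μ]
    {v : ℝ → ℝ} (hv : ∀ (y : Sph d) (r : ℝ), (μ (geoBall y r)).toReal = v r) :
    Measurable v := (v_mono μ hv).measurable

lemma iiV (μ : Measure (Sph d)) [IsProbabilityMeasure μ]
    {v : ℝ → ℝ} (hv : ∀ (y : Sph d) (r : ℝ), (μ (geoBall y r)).toReal = v r) :
    IntervalIntegrable (fun r => v r * sin r) volume 0 π := by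
  apply ii_of_meas_bdd ((measurable_v μ hv).mul measurable_sin)
  intro r
  simp only [Pi.mul_apply, Pi.sub_apply]
  rw [abs_mul]
  have h1 : |v r| ≤ 1 := by
    rw [abs_of_nonneg (v_nonneg μ hv r)]; exact v_le_one μ hv r
  nlinarith [abs_sin_le_one r, abs_nonneg (v r), abs_nonneg (sin r)]

lemma iiV2 (μ : Measure (Sph d)) [IsProbabilityMeasure μ]
    {v : ℝ → ℝ} (hv : ∀ (y : Sph d) (r : ℝ), (μ (geoBall y r)).toReal = v r) :
    IntervalIntegrable (fun r => (v r)^2 * sin r) volume 0 π := by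
  apply ii_of_meas_bdd (((measurable_v μ hv).pow_const 2).mul measurable_sin)
  intro r
  simp only [Pi.mul_apply, Pi.sub_apply]
  rw [abs_mul]
  have h1 : |(v r)^2| ≤ 1 := by
    rw [abs_of_nonneg (sq_nonneg _)]
    nlinarith [v_nonneg μ hv r, v_le_one μ hv r]
  nlinarith [abs_sin_le_one r, abs_nonneg ((v r)^2), abs_nonneg (sin r)]

lemma iiK (μ : Measure (Sph d)) [IsProbabilityMeasure μ] (x y : Sph d) :
    IntervalIntegrable (fun r => Kk μ r x y * sin r) volume 0 π := by
  apply ii_of_meas_bdd ((Kk_mono μ x y).measurable.mul measurable_sin)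
  intro r
  simp only [Pi.mul_apply, Pi.sub_apply]
  rw [abs_mul]
  have h1 : |Kk μ r x y| ≤ 1 := by
    rw [abs_of_nonneg (Kk_nonneg μ r x y)]; exact Kk_le_one μ r x y
  nlinarith [abs_sin_le_one r, abs_nonneg (Kk μ r x y), abs_nonneg (sin r)]

lemma intKsin (μ : Measure (Sph d)) [IsProbabilityMeasure μ]
    {v : ℝ → ℝ} (hv : ∀ (y : Sph d) (r : ℝ), (μ (geoBall y r)).toReal = v r) (x y : Sph d) :
    ∫ r in (0:ℝ)..π, Kk μ r x y * sin r
      = (∫ r in (0:ℝ)..π, v r * sin r) - thetaDelta μ x y := by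
  have hVK : IntervalIntegrable (fun r => (v r - Kk μ r x y) * sin r) volume 0 π := by
    apply ii_of_meas_bdd (((measurable_v μ hv).sub (Kk_mono μ x y).measurable).mul measurable_sin)
    intro r
    simp only [Pi.mul_apply, Pi.sub_apply]
    rw [abs_mul]
    have h1 : |v r - Kk μ r x y| ≤ 1 := by
      rw [abs_le]
      constructor <;>
        nlinarith [v_nonneg μ hv r, v_le_one μ hv r, Kk_nonneg μ r x y, Kk_le_one μ r x y]
    nlinarith [abs_sin_le_one r, abs_nonneg (v r - Kk μ r x y), abs_nonneg (sin r)]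
  rw [thetaDelta_r μ hv x y, ← intervalIntegral.integral_sub (iiV μ hv) hVK]
  apply intervalIntegral.integral_congr
  intro r _
  ring

/-- joint measurability of the intersection kernel -/
lemma measurable_Kk (μ : Measure (Sph d)) [IsProbabilityMeasure μ] (x : Sph d) :
    Measurable (fun p : ℝ × Sph d => Kk μ p.1 x p.2) := by
  classical
  set Q : Set ((ℝ × Sph d) × Sph d) :=
    {q | geo q.2 x < q.1.1 ∧ geo q.2 q.1.2 < q.1.1} with hQdef
  have hQ : MeasurableSet Q := by
    apply MeasurableSet.inter
    · exact measurableSet_lt ((continuous_geo_fst x).comp continuous_snd).measurable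
        (measurable_fst.comp measurable_fst)
    · exact measurableSet_lt
        (continuous_geo₂.comp (continuous_snd.prodMk
          (continuous_snd.comp continuous_fst))).measurable
        (measurable_fst.comp measurable_fst)
  have hrep : ∀ p : ℝ × Sph d,
      Kk μ p.1 x p.2 = (∫⁻ z, Q.indicator (fun _ => (1:ℝ≥0∞)) (p, z) ∂μ).toReal := by
    intro p
    unfold Kk
    congr 1
    rw [show (μ (geoBall x p.1 ∩ geoBall p.2 p.1))
        = ∫⁻ z, (geoBall x p.1 ∩ geoBall p.2 p.1).indicator 1 z ∂μ from
      (lintegral_indicator_one ((measurableSet_geoBall x p.1).inter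
        (measurableSet_geoBall p.2 p.1))).symm]
    apply lintegral_congr
    intro z
    by_cases hz : z ∈ geoBall x p.1 ∩ geoBall p.2 p.1
    · rw [Set.indicator_of_mem hz,
        Set.indicator_of_mem (show (p, z) ∈ Q from ⟨hz.1, hz.2⟩)]
      rfl
    · rw [Set.indicator_of_notMem hz,
        Set.indicator_of_notMem (show (p, z) ∉ Q from fun hc => hz ⟨hc.1, hc.2⟩)]
  have : (fun p : ℝ × Sph d => Kk μ p.1 x p.2)
      = fun p => (∫⁻ z, Q.indicator (fun _ => (1:ℝ≥0∞)) (p, z) ∂μ).toReal := funext hrep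
  rw [this]
  apply Measurable.ennreal_toReal
  exact Measurable.lintegral_prod_right' (measurable_const.indicator hQ)

/-- the average of the intersection kernel -/
lemma intKy (μ : Measure (Sph d)) [IsProbabilityMeasure μ]
    {v : ℝ → ℝ} (hv : ∀ (y : Sph d) (r : ℝ), (μ (geoBall y r)).toReal = v r)
    (x : Sph d) (r : ℝ) :
    ∫ y, Kk μ r x y ∂μ = (v r)^2 := by
  classical
  set f : Sph d → Sph d → ℝ := fun y z =>
    (geoBall x r).indicator (fun _ => (1:ℝ)) z * (geoBall z r).indicator (fun _ => (1:ℝ)) y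
    with hfdef
  have hK : ∀ y, Kk μ r x y = ∫ z, f y z ∂μ := by
    intro y
    unfold Kk
    rw [← measureReal_def, ← integral_indicator_one ((measurableSet_geoBall x r).inter (measurableSet_geoBall y r))]
    apply integral_congr_ae; filter_upwards with z
    calc (geoBall x r ∩ geoBall y r).indicator (1 : Sph d → ℝ) z
        = (geoBall x r).indicator (fun _ => (1:ℝ)) z
            * (geoBall y r).indicator (fun _ => (1:ℝ)) z := (indicator_mul _ _ z).symm
      _ = f y z := by
          simp only [hfdef]
          rw [indicator_swap r y z]
  set Q2 : Set (Sph d × Sph d) := {p | geo p.2 x < r ∧ geo p.1 p.2 < r} with hQ2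
  have hQ2m : MeasurableSet Q2 := by
    apply MeasurableSet.inter
    · exact measurableSet_lt ((continuous_geo_fst x).comp continuous_snd).measurable
        measurable_const
    · exact measurableSet_lt continuous_geo₂.measurable measurable_const
  have huncurry : Function.uncurry f = Q2.indicator (fun _ => (1:ℝ)) := by
    funext p
    show f p.1 p.2 = _
    simp only [hfdef]
    by_cases h1 : p.2 ∈ geoBall x r <;> by_cases h2 : p.1 ∈ geoBall p.2 r
    · rw [Set.indicator_of_mem h1, Set.indicator_of_mem h2,
        Set.indicator_of_mem (show p ∈ Q2 from ⟨h1, h2⟩)]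
      norm_num
    · rw [Set.indicator_of_notMem h2,
        Set.indicator_of_notMem (show p ∉ Q2 from fun hc => h2 hc.2)]
      rw [mul_zero]
    · rw [Set.indicator_of_notMem h1,
        Set.indicator_of_notMem (show p ∉ Q2 from fun hc => h1 hc.1)]
      rw [zero_mul]
    · rw [Set.indicator_of_notMem h1,
        Set.indicator_of_notMem (show p ∉ Q2 from fun hc => h1 hc.1)]
      rw [zero_mul]
  have hint : Integrable (Function.uncurry f) (μ.prod μ) := by
    rw [huncurry]
    exact Integrable.indicator (integrable_const 1) hQ2m
  calc ∫ y, Kk μ r x y ∂μ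
      = ∫ y, (∫ z, f y z ∂μ) ∂μ := by
        apply integral_congr_ae; filter_upwards with y; exact hK y
    _ = ∫ z, (∫ y, f y z ∂μ) ∂μ := integral_integral_swap hint
    _ = ∫ z, (geoBall x r).indicator (fun _ => (1:ℝ)) z * v r ∂μ := by
        apply integral_congr_ae; filter_upwards with z
        simp only [hfdef]
        rw [integral_const_mul]
        congr 1
        rw [show ((geoBall z r)).indicator (fun _ => (1:ℝ))
            = (geoBall z r).indicator 1 from rfl,
          integral_indicator_one (measurableSet_geoBall z r)]
        exact hv z r
    _ = (v r)^2 := by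
        rw [integral_mul_const,
          show ((geoBall x r)).indicator (fun _ => (1:ℝ))
            = (geoBall x r).indicator 1 from rfl,
          integral_indicator_one (measurableSet_geoBall x r), measureReal_def, hv x r, sq]

/-- inner integral of thetaDelta against the measure -/
lemma intThetaY (μ : Measure (Sph d)) [IsProbabilityMeasure μ]
    {v : ℝ → ℝ} (hv : ∀ (y : Sph d) (r : ℝ), (μ (geoBall y r)).toReal = v r) (x : Sph d) :
    ∫ y, thetaDelta μ x y ∂μ = ∫ r in (0:ℝ)..π, (v r - (v r)^2) * sin r := by
  classical
  set f : Sph d → ℝ → ℝ := fun y r => (v r - Kk μ r x y) * sin r with hfdef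
  have hmK : Measurable (fun p : Sph d × ℝ => Kk μ p.2 x p.1) :=
    (measurable_Kk μ x).comp (measurable_snd.prodMk measurable_fst)
  have hmf : Measurable (Function.uncurry f) := by
    have : Function.uncurry f
        = fun p : Sph d × ℝ => (v p.2 - Kk μ p.2 x p.1) * sin p.2 := rfl
    rw [this]
    exact (((measurable_v μ hv).comp measurable_snd).sub hmK).mul
      (measurable_sin.comp measurable_snd)
  have hint : Integrable (Function.uncurry f) (μ.prod (volume.restrict (Set.Ioc 0 π))) := by
    apply Integrable.mono' (integrable_const (1:ℝ)) hmf.aestronglyMeasurable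
    filter_upwards with p
    have : Function.uncurry f p = (v p.2 - Kk μ p.2 x p.1) * sin p.2 := rfl
    rw [this, Real.norm_eq_abs, abs_mul]
    have h1 : |v p.2 - Kk μ p.2 x p.1| ≤ 1 := by
      rw [abs_le]
      constructor <;> nlinarith [v_nonneg μ hv p.2, v_le_one μ hv p.2,
        Kk_nonneg μ p.2 x p.1, Kk_le_one μ p.2 x p.1]
    nlinarith [abs_sin_le_one p.2, abs_nonneg (v p.2 - Kk μ p.2 x p.1), abs_nonneg (sin p.2)]
  rw [intervalIntegral.integral_of_le Real.pi_pos.le]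
  calc ∫ y, thetaDelta μ x y ∂μ
      = ∫ y, (∫ r in Set.Ioc (0:ℝ) π, f y r) ∂μ := by
        apply integral_congr_ae; filter_upwards with y
        rw [thetaDelta_r μ hv x y, intervalIntegral.integral_of_le Real.pi_pos.le]
    _ = ∫ r in Set.Ioc (0:ℝ) π, (∫ y, f y r ∂μ) := integral_integral_swap hint
    _ = ∫ r in Set.Ioc (0:ℝ) π, (v r - (v r)^2) * sin r := by
        apply setIntegral_congr_ae measurableSet_Ioc
        filter_upwards with r _
        have hKint : Integrable (fun y => Kk μ r x y) μ := by
          apply Integrable.mono' (integrable_const (1:ℝ))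
            (((measurable_Kk μ x).comp (measurable_const.prodMk measurable_id)).aestronglyMeasurable)
          filter_upwards with y
          show ‖Kk μ r x y‖ ≤ 1
          rw [Real.norm_eq_abs, abs_of_nonneg (Kk_nonneg μ r x y)]
          exact Kk_le_one μ r x y
        have : (fun y => f y r) = fun y => (v r - Kk μ r x y) * sin r := rfl
        rw [this, integral_mul_const, integral_sub (integrable_const _) hKint,
          integral_const, intKy μ hv x r, probReal_univ]
        simp



theorem stolarsky_invariance_sphere' {d N : ℕ}
    (μ : Measure (Sph d)) [IsProbabilityMeasure μ]
    (hinv : ∀ g : Sph d ≃ᵢ Sph d, μ.map g = μ)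
    (v : ℝ → ℝ) (hv : ∀ (y : Sph d) (r : ℝ), (μ (geoBall y r)).toReal = v r)
    (D : Fin N → Sph d) :
    ((∫ x, ∫ y, chord x y ∂μ ∂μ) / (∫ x, ∫ y, thetaDelta μ x y ∂μ ∂μ)) *
        (∫ r in (0:ℝ)..π, sin r *
          ∫ y, ((∑ i, (geoBall y r).indicator (fun _ => (1 : ℝ)) (D i))
                  - (N : ℝ) * v r) ^ 2 ∂μ)
      + (∑ i, ∑ j, chord (D i) (D j))
      = (∫ x, ∫ y, chord x y ∂μ ∂μ) * (N : ℝ) ^ 2 := by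
  classical
  set κ : ℝ := ∫ z, |(inner ℝ (z : EuclideanSpace ℝ (Fin (d+1)))
      (e0 : EuclideanSpace ℝ (Fin (d+1))) : ℝ)| ∂μ with hκdef
  have hκpos : 0 < κ := kappa_pos μ hinv
  have hθc : ∀ x y : Sph d, thetaDelta μ x y = κ * chord x y := fun x y =>
    thetaDelta_eq_chord μ hinv x y
  set A : ℝ := ∫ r in (0:ℝ)..π, (v r - (v r)^2) * sin r with hAdef
  set C₁ : ℝ := ∫ r in (0:ℝ)..π, v r * sin r with hC₁def
  set S : ℝ := ∑ i, ∑ j, chord (D i) (D j) with hSdef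
  have h1 : ∀ x : Sph d, ∫ y, thetaDelta μ x y ∂μ = A := fun x => intThetaY μ hv x
  have hchordint : ∀ x : Sph d, ∫ y, thetaDelta μ x y ∂μ = κ * ∫ y, chord x y ∂μ := by
    intro x
    rw [show (fun y => thetaDelta μ x y) = fun y => κ * chord x y from funext (hθc x)]
    exact integral_const_mul _ _
  have h2 : ∀ x : Sph d, ∫ y, chord x y ∂μ = A / κ := by
    intro x
    have := (hchordint x).symm.trans (h1 x)
    field_simp
    linarith [this]
  have hApos : 0 < A := by
    have hge := integral_chord_ge μ hinv (x₀ : Sph d)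
    rw [h2 (x₀ : Sph d)] at hge
    have h3 : 1/2 * κ ≤ A := (le_div_iff₀ hκpos).mp hge
    nlinarith
  have hT : (∫ x, ∫ y, chord x y ∂μ ∂μ) = A / κ := by
    rw [show (fun x => ∫ y, chord x y ∂μ) = fun _ => A / κ from funext h2,
      integral_const, probReal_univ]
    simp
  have hTd : (∫ x, ∫ y, thetaDelta μ x y ∂μ ∂μ) = A := by
    rw [show (fun x => ∫ y, thetaDelta μ x y ∂μ) = fun _ => A from funext h1,
      integral_const, probReal_univ]
    simp
  -- the lambda computation
  have hiiK : ∀ i j : Fin N, IntervalIntegrable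
      (fun r => Kk μ r (D i) (D j) * sin r) volume 0 π := fun i j => iiK μ (D i) (D j)
  have hfun : (fun r => sin r *
      ∫ y, ((∑ i, (geoBall y r).indicator (fun _ => (1 : ℝ)) (D i)) - (N : ℝ) * v r) ^ 2 ∂μ)
      = fun r => (∑ i, ∑ j, Kk μ r (D i) (D j) * sin r)
          - (N:ℝ)^2 * ((v r)^2 * sin r) := by
    funext r
    rw [Fexp μ hv D r]
    have : sin r * ((∑ i, ∑ j, Kk μ r (D i) (D j)) - (N:ℝ)^2 * (v r)^2)
        = (∑ i, ∑ j, Kk μ r (D i) (D j)) * sin r - (N:ℝ)^2 * ((v r)^2 * sin r) := by ring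
    rw [this, Finset.sum_mul]
    congr 1
    exact Finset.sum_congr rfl fun i _ => Finset.sum_mul _ _ _
  have hiiKsum : ∀ i : Fin N, IntervalIntegrable
      (fun r => ∑ j, Kk μ r (D i) (D j) * sin r) volume 0 π := by
    intro i
    have heq : (∑ j : Fin N, fun r => Kk μ r (D i) (D j) * sin r)
        = fun r => ∑ j, Kk μ r (D i) (D j) * sin r := by
      funext r; simp
    rw [← heq]
    exact IntervalIntegrable.sum _ (fun j _ => hiiK i j)
  have hii1 : IntervalIntegrable
      (fun r => ∑ i, ∑ j, Kk μ r (D i) (D j) * sin r) volume 0 π := by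
    have heq : (∑ i : Fin N, fun r => ∑ j, Kk μ r (D i) (D j) * sin r)
        = fun r => ∑ i, ∑ j, Kk μ r (D i) (D j) * sin r := by
      funext r; simp
    rw [← heq]
    exact IntervalIntegrable.sum _ (fun i _ => hiiKsum i)
  have hA' : A = C₁ - ∫ r in (0:ℝ)..π, (v r)^2 * sin r := by
    rw [hAdef, hC₁def, ← intervalIntegral.integral_sub (iiV μ hv) (iiV2 μ hv)]
    apply intervalIntegral.integral_congr
    intro r _
    ring
  have hlam : (∫ r in (0:ℝ)..π, sin r *
      ∫ y, ((∑ i, (geoBall y r).indicator (fun _ => (1 : ℝ)) (D i)) - (N : ℝ) * v r) ^ 2 ∂μ)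
      = (N:ℝ)^2 * A - κ * S := by
    rw [hfun, intervalIntegral.integral_sub hii1 ((iiV2 μ hv).const_mul _),
      intervalIntegral.integral_finset_sum (fun i _ => hiiKsum i),
      intervalIntegral.integral_const_mul]
    have hsum : ∑ i : Fin N, ∫ r in (0:ℝ)..π, (∑ j, Kk μ r (D i) (D j) * sin r)
        = ∑ i : Fin N, ∑ j : Fin N, (C₁ - κ * chord (D i) (D j)) := by
      apply Finset.sum_congr rfl; intro i _
      rw [intervalIntegral.integral_finset_sum (fun j _ => hiiK i j)]
      apply Finset.sum_congr rfl; intro j _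
      rw [intKsin μ hv (D i) (D j), hθc (D i) (D j)]
    rw [hsum]
    have : ∑ i : Fin N, ∑ j : Fin N, (C₁ - κ * chord (D i) (D j))
        = (N:ℝ)^2 * C₁ - κ * S := by
      rw [hSdef]
      simp only [Finset.sum_sub_distrib, Finset.sum_const, Finset.card_univ,
        Fintype.card_fin, nsmul_eq_mul, Finset.mul_sum]
      push_cast
      ring
    rw [this, hA']
    ring
  rw [hT, hTd, hlam]
  have hκne : κ ≠ 0 := hκpos.ne'
  have hAne : A ≠ 0 := hApos.ne'
  field_simp
  ring
end StolAux

/-- Stolarsky invariance principle on `S^d`: for any `N` points `x₁,…,x_N` on the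
sphere, `γ·λ[η♮,D_N] + Σ_{i,j} τ(x_i,x_j) = ⟨τ⟩ N²` where
`λ[η♮,D_N] = ∫_0^π sin r ∫ (#{B_r(y) ∩ D_N} − N v_r)² dμ(y) dr`,
`⟨τ⟩ = ∬ τ dμ dμ`, and `γ = ⟨τ⟩/⟨θ^Δ(η♮)⟩`. -/
theorem stolarsky_invariance_sphere {d N : ℕ}
    (μ : Measure (Sph d)) [IsProbabilityMeasure μ]
    (hinv : ∀ g : Sph d ≃ᵢ Sph d, μ.map g = μ)
    (v : ℝ → ℝ) (hv : ∀ (y : Sph d) (r : ℝ), (μ (geoBall y r)).toReal = v r)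
    (D : Fin N → Sph d) :
    ((∫ x, ∫ y, chord x y ∂μ ∂μ) / (∫ x, ∫ y, thetaDelta μ x y ∂μ ∂μ)) *
        (∫ r in (0:ℝ)..π, sin r *
          ∫ y, ((∑ i, (geoBall y r).indicator (fun _ => (1 : ℝ)) (D i))
                  - (N : ℝ) * v r) ^ 2 ∂μ)
      + (∑ i, ∑ j, chord (D i) (D j))
      = (∫ x, ∫ y, chord x y ∂μ ∂μ) * (N : ℝ) ^ 2 :=
  StolAux.stolarsky_invariance_sphere' μ hinv v hv D

end
end

section
/- In a geodesic metric space where ball volumes satisfy the formula v_r = κ ∫_0^r (sin(u/2))^{d−1}(cos(u/2))^{d₀−1} du, the Lipschitz-type bound θ^Δ_r(y₁,y₂) ≤ C (sin(r/2))^{d−1} (cos(r/2))^{d₀−1} θ(y₁,y₂) holds with a constant C depending only on d and d₀, using the inclusion B_{r−δ}(y₀) ⊆ B_r(y₁) ∩ B_r(y₂) for the geodesic midpoint y₀ of y₁, y₂ with δ = θ(y₁,y₂)/2. -/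
open MeasureTheory Metric Real

set_option maxHeartbeats 2000000 in
/-- Lipschitz-type bound for the symmetric difference metric: in a metric space of
diameter `π` with midpoints, whose ball volumes are given by
`v_r = κ ∫_0^r (sin(u/2))^{d−1}(cos(u/2))^{d₀−1} du`, one has
`θ^Δ_r(y₁,y₂) ≤ C (sin(r/2))^{d−1}(cos(r/2))^{d₀−1} θ(y₁,y₂)`
with a constant `C` depending only on `d` and `d₀`. -/
theorem symmDiff_metric_lipschitz {M : Type*} [MetricSpace M] [CompactSpace M]
    [MeasurableSpace M] [BorelSpace M]
    (μ : Measure M) [IsProbabilityMeasure μ]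
    (d d₀ : ℕ) (hd₀ : 1 ≤ d₀) (hdd : d₀ ≤ d) (κ : ℝ)
    (hv : ∀ (y : M) (r : ℝ), r ∈ Set.Icc (0 : ℝ) π →
      (μ (ball y r)).toReal =
        κ * ∫ u in (0:ℝ)..r, (sin (u / 2)) ^ (d - 1) * (cos (u / 2)) ^ (d₀ - 1))
    (hdiam : ∀ x y : M, dist x y ≤ π)
    (hmid : ∀ y₁ y₂ : M, ∃ y₀ : M,
      dist y₁ y₀ = dist y₁ y₂ / 2 ∧ dist y₂ y₀ = dist y₁ y₂ / 2) :
    ∃ C : ℝ, 0 < C ∧ ∀ (y₁ y₂ : M), ∀ r ∈ Set.Icc (0 : ℝ) π,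
      (1 / 2) * (μ (symmDiff (ball y₁ r) (ball y₂ r))).toReal
        ≤ C * (sin (r / 2)) ^ (d - 1) * (cos (r / 2)) ^ (d₀ - 1) * dist y₁ y₂ := by
  have hπ := pi_pos
  -- the space is nonempty
  have hne : Nonempty M := by
    by_contra h
    rw [not_nonempty_iff] at h
    have h1 : (μ Set.univ) = 1 := measure_univ
    rw [Set.univ_eq_empty_iff.mpr h, measure_empty] at h1
    exact zero_ne_one h1
  obtain ⟨y⟩ := hne
  set f : ℝ → ℝ := fun u => (sin (u / 2)) ^ (d - 1) * (cos (u / 2)) ^ (d₀ - 1) with hfdef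
  have hv' : ∀ (z : M) (r : ℝ), r ∈ Set.Icc (0:ℝ) π →
      (μ (ball z r)).toReal = κ * ∫ u in (0:ℝ)..r, f u := hv
  have hfc : Continuous f := by
    apply Continuous.mul
    · exact (Real.continuous_sin.comp (continuous_id.div_const 2)).pow _
    · exact (Real.continuous_cos.comp (continuous_id.div_const 2)).pow _
  have hfi : ∀ a b : ℝ, IntervalIntegrable f volume a b := fun a b => hfc.intervalIntegrable a b
  have hI : 0 < ∫ u in (0:ℝ)..π, f u := by
    apply intervalIntegral.intervalIntegral_pos_of_pos_on (hfi 0 π) _ hπ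
    intro x hx
    have h1 : 0 < sin (x / 2) := sin_pos_of_pos_of_lt_pi (by linarith [hx.1]) (by linarith [hx.2])
    have h2 : 0 < cos (x / 2) := cos_pos_of_mem_Ioo ⟨by linarith [hx.1], by linarith [hx.2]⟩
    positivity
  have hκ : 0 ≤ κ := by
    have h0 := hv' y π ⟨le_of_lt hπ, le_refl _⟩
    have h1 : (0:ℝ) ≤ (μ (ball y π)).toReal := ENNReal.toReal_nonneg
    rw [h0] at h1
    nlinarith
  -- sin monotonicity on half-angles
  have hsinmono : ∀ x y' : ℝ, 0 ≤ x → x ≤ y' → y' ≤ π → sin (x / 2) ≤ sin (y' / 2) := by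
    intro x y' hx hxy hy'
    exact Real.strictMonoOn_sin.monotoneOn ⟨by linarith, by linarith⟩
      ⟨by linarith, by linarith⟩ (by linarith)
  have hsinnn : ∀ x : ℝ, 0 ≤ x → x ≤ π → 0 ≤ sin (x / 2) :=
    fun x hx hxπ => sin_nonneg_of_nonneg_of_le_pi (by linarith) (by linarith)
  have hcosnn : ∀ x : ℝ, 0 ≤ x → x ≤ π → 0 ≤ cos (x / 2) :=
    fun x hx hxπ => cos_nonneg_of_mem_Icc ⟨by linarith, by linarith⟩
  have hcosmono : ∀ x y' : ℝ, 0 ≤ x → x ≤ y' → y' ≤ π → cos (y' / 2) ≤ cos (x / 2) :=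
    fun x y' hx hxy hy' => Real.cos_le_cos_of_nonneg_of_le_pi (by linarith) (by linarith) (by linarith)
  have hf_le_one : ∀ u : ℝ, 0 ≤ u → u ≤ π → f u ≤ 1 := by
    intro u hu huπ
    exact mul_le_one₀ (pow_le_one₀ (hsinnn u hu huπ) (sin_le_one _))
      (pow_nonneg (hcosnn u hu huπ) _) (pow_le_one₀ (hcosnn u hu huπ) (cos_le_one _))
  -- annulus volume formula
  have hann : ∀ (z : M) (a b : ℝ), 0 ≤ a → a ≤ b → b ≤ π →
      (μ (ball z b \ ball z a)).toReal = κ * ∫ u in a..b, f u := by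
    intro z a b ha hab hb
    have hsub : ball z a ⊆ ball z b := ball_subset_ball hab
    rw [measure_diff hsub measurableSet_ball.nullMeasurableSet (measure_ne_top μ _),
      ENNReal.toReal_sub_of_le (measure_mono hsub) (measure_ne_top μ _),
      hv' z b ⟨le_trans ha hab, hb⟩, hv' z a ⟨ha, le_trans hab hb⟩,
      ← intervalIntegral.integral_interval_sub_left (hfi 0 b) (hfi 0 a)]
    ring
  -- integral bound by sup
  have hint_le : ∀ (a b M₀ : ℝ), a ≤ b → (∀ u ∈ Set.Icc a b, f u ≤ M₀) →
      (∫ u in a..b, f u) ≤ M₀ * (b - a) := by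
    intro a b M₀ hab hM
    calc (∫ u in a..b, f u) ≤ ∫ _u in a..b, M₀ :=
          intervalIntegral.integral_mono_on hab (hfi a b) intervalIntegrable_const hM
      _ = M₀ * (b - a) := by rw [intervalIntegral.integral_const, smul_eq_mul]; ring
  -- symmDiff splitting
  have hsd : ∀ s t : Set M, (μ (symmDiff s t)).toReal ≤ (μ (s \ t)).toReal + (μ (t \ s)).toReal := by
    intro s t
    have h1 : μ (symmDiff s t) ≤ μ (s \ t) + μ (t \ s) := by
      rw [Set.symmDiff_def]; exact measure_union_le _ _
    have h2 := ENNReal.toReal_mono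
      (ENNReal.add_ne_top.mpr ⟨measure_ne_top μ _, measure_ne_top μ _⟩) h1
    rwa [ENNReal.toReal_add (measure_ne_top μ _) (measure_ne_top μ _)] at h2
  -- one-step bound
  have hstep : ∀ (r : ℝ), 0 ≤ r → r ≤ π → ∀ a b : M, dist a b ≤ 2 * r → r + dist a b ≤ π →
      (μ (ball a r \ ball b r)).toReal ≤
        κ * 3 ^ (d - 1) * sin (r / 2) ^ (d - 1) * cos (r / 2) ^ (d₀ - 1) * dist a b := by
    intro r hr0 hrπ a b he2r hreπ
    have he0 : 0 ≤ dist a b := dist_nonneg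
    set e := dist a b with hedef
    have hincl : ball a r \ ball b r ⊆ ball b (r + e) \ ball b r := by
      rintro z ⟨hz1, hz2⟩
      refine ⟨?_, hz2⟩
      rw [mem_ball] at hz1 ⊢
      calc dist z b ≤ dist z a + dist a b := dist_triangle z a b
        _ < r + e := by rw [← hedef]; linarith
    have h1 : (μ (ball a r \ ball b r)).toReal ≤ (μ (ball b (r + e) \ ball b r)).toReal :=
      ENNReal.toReal_mono (measure_ne_top μ _) (measure_mono hincl)
    rw [hann b r (r + e) hr0 (by linarith) (by linarith)] at h1
    have hpt : ∀ u ∈ Set.Icc r (r + e),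
        f u ≤ 3 ^ (d - 1) * sin (r / 2) ^ (d - 1) * cos (r / 2) ^ (d₀ - 1) := by
      intro u hu
      have hu0 : 0 ≤ u := le_trans hr0 hu.1
      have huπ : u ≤ π := le_trans hu.2 (by linarith)
      have hsin3 : sin (u / 2) ≤ 3 * sin (r / 2) := by
        have h2 : sin (u / 2) ≤ sin ((r + e) / 2) := hsinmono u (r + e) hu0 hu.2 (by linarith)
        have h3 : sin ((r + e) / 2) ≤ sin (r / 2) + sin (e / 2) := by
          rw [show (r + e) / 2 = r / 2 + e / 2 by ring, Real.sin_add]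
          have c1 : cos (e / 2) ≤ 1 := cos_le_one _
          have c2 : cos (r / 2) ≤ 1 := cos_le_one _
          have c2' : 0 ≤ cos (r / 2) := hcosnn r hr0 hrπ
          have s1 : 0 ≤ sin (r / 2) := hsinnn r hr0 hrπ
          have s2 : 0 ≤ sin (e / 2) := hsinnn e he0 (by linarith)
          nlinarith
        have h4 : sin (e / 2) ≤ 2 * sin (r / 2) := by
          rw [show e / 2 = 2 * (e / 4) by ring, Real.sin_two_mul]
          have c1 : cos (e / 4) ≤ 1 := cos_le_one _
          have s1 : 0 ≤ sin (e / 4) := sin_nonneg_of_nonneg_of_le_pi (by linarith) (by linarith)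
          have h6 : sin (e / 4) ≤ sin (r / 2) := by
            have h7 := hsinmono (e / 2) r (by linarith) (by linarith) hrπ
            rwa [show e / 2 / 2 = e / 4 by ring] at h7
          nlinarith
        linarith
      have hs0u : 0 ≤ sin (u / 2) := hsinnn u hu0 huπ
      have hc0 : 0 ≤ cos (u / 2) := hcosnn u hu0 huπ
      have hc : cos (u / 2) ≤ cos (r / 2) := hcosmono r u hr0 hu.1 huπ
      have hp1 : sin (u / 2) ^ (d - 1) ≤ (3 * sin (r / 2)) ^ (d - 1) :=
        pow_le_pow_left₀ hs0u hsin3 _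
      have hp2 : cos (u / 2) ^ (d₀ - 1) ≤ cos (r / 2) ^ (d₀ - 1) :=
        pow_le_pow_left₀ hc0 hc _
      have key : f u ≤ (3 * sin (r / 2)) ^ (d - 1) * cos (r / 2) ^ (d₀ - 1) :=
        mul_le_mul hp1 hp2 (pow_nonneg hc0 _)
          (pow_nonneg (by nlinarith [hsinnn r hr0 hrπ]) _)
      calc f u ≤ (3 * sin (r / 2)) ^ (d - 1) * cos (r / 2) ^ (d₀ - 1) := key
        _ = 3 ^ (d - 1) * sin (r / 2) ^ (d - 1) * cos (r / 2) ^ (d₀ - 1) := by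
          rw [mul_pow]
    have h7 := hint_le r (r + e) _ (by linarith) hpt
    calc (μ (ball a r \ ball b r)).toReal ≤ κ * ∫ u in r..(r + e), f u := h1
      _ ≤ κ * (3 ^ (d - 1) * sin (r / 2) ^ (d - 1) * cos (r / 2) ^ (d₀ - 1) * (r + e - r)) :=
          mul_le_mul_of_nonneg_left h7 hκ
      _ = κ * 3 ^ (d - 1) * sin (r / 2) ^ (d - 1) * cos (r / 2) ^ (d₀ - 1) * e := by ring
  -- dyadic chaining
  have hQ : ∀ (r : ℝ), 0 ≤ r → r ≤ π → ∀ k : ℕ, ∀ a b : M, dist a b ≤ 2 * r →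
      dist a b ≤ 2 ^ k * (π - r) →
      (μ (symmDiff (ball a r) (ball b r))).toReal ≤
        2 * (κ * 3 ^ (d - 1) * sin (r / 2) ^ (d - 1) * cos (r / 2) ^ (d₀ - 1)) * dist a b := by
    intro r hr0 hrπ k
    induction k with
    | zero =>
      intro a b h1 h2
      rw [pow_zero, one_mul] at h2
      have ha := hstep r hr0 hrπ a b h1 (by linarith)
      have hb := hstep r hr0 hrπ b a (by rwa [dist_comm]) (by rw [dist_comm]; linarith)
      rw [dist_comm b a] at hb
      have h3 := hsd (ball a r) (ball b r)
      linarith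
    | succ k ih =>
      intro a b h1 h2
      obtain ⟨m, hm1, hm2⟩ := hmid a b
      have hd3 : dist m b = dist a b / 2 := by rw [dist_comm]; exact hm2
      have he0 : 0 ≤ dist a b := dist_nonneg
      have hpk : (0:ℝ) < 2 ^ k := by positivity
      have hπr : 0 ≤ π - r := by linarith
      have h2' : dist a b / 2 ≤ 2 ^ k * (π - r) := by
        rw [pow_succ] at h2; nlinarith
      have htri : (μ (symmDiff (ball a r) (ball b r))).toReal ≤
          (μ (symmDiff (ball a r) (ball m r))).toReal +
            (μ (symmDiff (ball m r) (ball b r))).toReal := by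
        have hsub := symmDiff_triangle (ball a r) (ball m r) (ball b r)
        have h3 : μ (symmDiff (ball a r) (ball b r)) ≤
            μ (symmDiff (ball a r) (ball m r)) + μ (symmDiff (ball m r) (ball b r)) :=
          le_trans (measure_mono hsub) (measure_union_le _ _)
        have h4 := ENNReal.toReal_mono
          (ENNReal.add_ne_top.mpr ⟨measure_ne_top μ _, measure_ne_top μ _⟩) h3
        rwa [ENNReal.toReal_add (measure_ne_top μ _) (measure_ne_top μ _)] at h4
      have i1 := ih a m (by rw [hm1]; linarith) (by rw [hm1]; linarith)
      have i2 := ih m b (by rw [hd3]; linarith) (by rw [hd3]; linarith)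
      rw [hm1] at i1
      rw [hd3] at i2
      linarith
  -- main midpoint-chained estimate, radius strictly below π
  have hmain : ∀ (s : ℝ), 0 ≤ s → s < π → ∀ a b : M, dist a b ≤ 2 * s →
      (μ (symmDiff (ball a s) (ball b s))).toReal ≤
        2 * (κ * 3 ^ (d - 1) * sin (s / 2) ^ (d - 1) * cos (s / 2) ^ (d₀ - 1)) * dist a b := by
    intro s hs0 hsπ a b hab
    obtain ⟨k, hk⟩ := pow_unbounded_of_one_lt (dist a b / (π - s)) (one_lt_two (α := ℝ))
    apply hQ s hs0 (le_of_lt hsπ) k a b hab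
    rw [div_lt_iff₀ (by linarith)] at hk
    linarith
  have h3pow : (1:ℝ) ≤ 3 ^ (d + d₀) := one_le_pow₀ (by norm_num)
  have hC : 0 < κ * 3 ^ (d + d₀) + 1 := by nlinarith
  refine ⟨κ * 3 ^ (d + d₀) + 1, hC, ?_⟩
  intro y₁ y₂ r hr
  obtain ⟨hr0, hrπ⟩ := hr
  have hSr : 0 ≤ sin (r / 2) := hsinnn r hr0 hrπ
  have hCr : 0 ≤ cos (r / 2) := hcosnn r hr0 hrπ
  have hSp : 0 ≤ sin (r / 2) ^ (d - 1) := pow_nonneg hSr _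
  have hCp : 0 ≤ cos (r / 2) ^ (d₀ - 1) := pow_nonneg hCr _
  have hdist0 : 0 ≤ dist y₁ y₂ := dist_nonneg
  have hdistπ : dist y₁ y₂ ≤ π := hdiam y₁ y₂
  by_cases hy : y₁ = y₂
  · subst hy
    simp [symmDiff_self, dist_self]
  rcases lt_or_ge r (dist y₁ y₂ / 2) with hsmall | hbig
  · -- tiny radius: bound by the union of the two balls
    have hrhalf : r ≤ π / 2 := by linarith
    have h1 : (μ (symmDiff (ball y₁ r) (ball y₂ r))).toReal ≤
        (μ (ball y₁ r)).toReal + (μ (ball y₂ r)).toReal := by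
      have h2 : μ (symmDiff (ball y₁ r) (ball y₂ r)) ≤ μ (ball y₁ r) + μ (ball y₂ r) :=
        le_trans (measure_mono Set.symmDiff_subset_union) (measure_union_le _ _)
      have h3 := ENNReal.toReal_mono
        (ENNReal.add_ne_top.mpr ⟨measure_ne_top μ _, measure_ne_top μ _⟩) h2
      rwa [ENNReal.toReal_add (measure_ne_top μ _) (measure_ne_top μ _)] at h3
    rw [hv' y₁ r ⟨hr0, hrπ⟩, hv' y₂ r ⟨hr0, hrπ⟩] at h1
    have hsqrt2 : (1:ℝ) ≤ 2 * cos (r / 2) := by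
      have h4 : cos (π / 4) ≤ cos (r / 2) :=
        Real.cos_le_cos_of_nonneg_of_le_pi (by linarith) (by linarith) (by linarith)
      rw [Real.cos_pi_div_four] at h4
      have h5 : (1:ℝ) ≤ Real.sqrt 2 := by
        rw [show (1:ℝ) = Real.sqrt 1 by simp]
        exact Real.sqrt_le_sqrt (by norm_num)
      linarith
    have hpt : ∀ u ∈ Set.Icc (0:ℝ) r,
        f u ≤ sin (r / 2) ^ (d - 1) * (2 * cos (r / 2)) ^ (d₀ - 1) := by
      intro u hu
      have hu0 : 0 ≤ u := hu.1
      have huπ : u ≤ π := le_trans hu.2 hrπ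
      have h6 : sin (u / 2) ^ (d - 1) ≤ sin (r / 2) ^ (d - 1) :=
        pow_le_pow_left₀ (hsinnn u hu0 huπ) (hsinmono u r hu0 hu.2 hrπ) _
      have h7 : cos (u / 2) ^ (d₀ - 1) ≤ (2 * cos (r / 2)) ^ (d₀ - 1) :=
        pow_le_pow_left₀ (hcosnn u hu0 huπ) (le_trans (cos_le_one _) hsqrt2) _
      exact mul_le_mul h6 h7 (pow_nonneg (hcosnn u hu0 huπ) _) hSp
    have h7 := hint_le 0 r _ hr0 hpt
    have e1 : κ * 2 ^ (d₀ - 1) ≤ κ * 3 ^ (d + d₀) + 1 := by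
      have e2 : (2:ℝ) ^ (d₀ - 1) ≤ 3 ^ (d + d₀) := by
        calc (2:ℝ) ^ (d₀ - 1) ≤ 3 ^ (d₀ - 1) := pow_le_pow_left₀ (by norm_num) (by norm_num) _
          _ ≤ 3 ^ (d + d₀) := pow_le_pow_right₀ (by norm_num) (by omega)
      nlinarith
    have e2 : r ≤ dist y₁ y₂ := by linarith
    have e3 : κ * 2 ^ (d₀ - 1) * r ≤ (κ * 3 ^ (d + d₀) + 1) * dist y₁ y₂ :=
      mul_le_mul e1 e2 hr0 (le_of_lt hC)
    have e4 := mul_le_mul_of_nonneg_right e3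
      (show 0 ≤ sin (r / 2) ^ (d - 1) * cos (r / 2) ^ (d₀ - 1) from mul_nonneg hSp hCp)
    have hκint : κ * (∫ u in (0:ℝ)..r, f u) ≤
        κ * (sin (r / 2) ^ (d - 1) * (2 * cos (r / 2)) ^ (d₀ - 1) * (r - 0)) :=
      mul_le_mul_of_nonneg_left h7 hκ
    calc (1 / 2) * (μ (symmDiff (ball y₁ r) (ball y₂ r))).toReal
        ≤ κ * ∫ u in (0:ℝ)..r, f u := by linarith
      _ ≤ κ * (sin (r / 2) ^ (d - 1) * (2 * cos (r / 2)) ^ (d₀ - 1) * (r - 0)) := hκint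
      _ = (κ * 2 ^ (d₀ - 1) * r) * (sin (r / 2) ^ (d - 1) * cos (r / 2) ^ (d₀ - 1)) := by
          rw [mul_pow]; ring
      _ ≤ ((κ * 3 ^ (d + d₀) + 1) * dist y₁ y₂) *
            (sin (r / 2) ^ (d - 1) * cos (r / 2) ^ (d₀ - 1)) := e4
      _ = (κ * 3 ^ (d + d₀) + 1) * sin (r / 2) ^ (d - 1) * cos (r / 2) ^ (d₀ - 1) *
            dist y₁ y₂ := by ring
  rcases eq_or_lt_of_le hrπ with hreq | hrlt
  · -- r = π
    subst hreq
    by_cases hd01 : d₀ = 1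
    · -- no cosine factor
      subst hd01
      obtain ⟨y₀, hm1, hm2⟩ := hmid y₁ y₂
      set δ := dist y₁ y₂ / 2 with hδdef
      have hδ0 : 0 ≤ δ := by positivity
      have hδπ : δ ≤ π / 2 := by rw [hδdef]; linarith
      have hsub1 : ball y₀ (π - δ) ⊆ ball y₁ π ∩ ball y₂ π := by
        rintro z hz
        rw [mem_ball] at hz
        constructor
        · rw [mem_ball]
          calc dist z y₁ ≤ dist z y₀ + dist y₀ y₁ := dist_triangle z y₀ y₁
            _ = dist z y₀ + dist y₁ y₀ := by rw [dist_comm y₀ y₁]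
            _ < (π - δ) + δ := by rw [hm1]; exact add_lt_add_left hz _
            _ = π := by ring
        · rw [mem_ball]
          calc dist z y₂ ≤ dist z y₀ + dist y₀ y₂ := dist_triangle z y₀ y₂
            _ = dist z y₀ + dist y₂ y₀ := by rw [dist_comm y₀ y₂]
            _ < (π - δ) + δ := by rw [hm2]; exact add_lt_add_left hz _
            _ = π := by ring
      have hdiffbound : ∀ a b : M, ball y₀ (π - δ) ⊆ ball a π ∩ ball b π →
          (μ (ball a π \ ball b π)).toReal ≤ κ * δ := by
        intro a b hsub2
        have h8 : (μ (ball a π \ ball b π)).toReal =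
            (μ (ball a π)).toReal - (μ (ball a π ∩ ball b π)).toReal := by
          rw [show ball a π \ ball b π = ball a π \ (ball a π ∩ ball b π) from
              (Set.diff_self_inter).symm,
            measure_diff Set.inter_subset_left
              (measurableSet_ball.inter measurableSet_ball).nullMeasurableSet
              (measure_ne_top μ _),
            ENNReal.toReal_sub_of_le (measure_mono Set.inter_subset_left) (measure_ne_top μ _)]
        have h9 : (μ (ball y₀ (π - δ))).toReal ≤ (μ (ball a π ∩ ball b π)).toReal :=
          ENNReal.toReal_mono (measure_ne_top μ _) (measure_mono hsub2)
        rw [hv' y₀ (π - δ) ⟨by linarith, by linarith⟩] at h9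
        rw [h8, hv' a π ⟨le_of_lt hπ, le_refl _⟩]
        have h10 : κ * (∫ u in (0:ℝ)..π, f u) - κ * (∫ u in (0:ℝ)..(π - δ), f u) =
            κ * ∫ u in (π - δ)..π, f u := by
          rw [← intervalIntegral.integral_interval_sub_left (hfi 0 π) (hfi 0 (π - δ))]
          ring
        have h11 : (∫ u in (π - δ)..π, f u) ≤ 1 * (π - (π - δ)) :=
          hint_le (π - δ) π 1 (by linarith) (fun u hu =>
            hf_le_one u (by linarith [hu.1]) (by linarith [hu.2]))
        have h12 : κ * (∫ u in (π - δ)..π, f u) ≤ κ * δ := by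
          have h12' := mul_le_mul_of_nonneg_left h11 hκ
          calc κ * (∫ u in (π - δ)..π, f u) ≤ κ * (1 * (π - (π - δ))) := h12'
            _ = κ * δ := by ring
        linarith
      have hb1 := hdiffbound y₁ y₂ hsub1
      have hb2 := hdiffbound y₂ y₁ (by rw [Set.inter_comm]; exact hsub1)
      have h13 := hsd (ball y₁ π) (ball y₂ π)
      have hfr : sin (π / 2) ^ (d - 1) * cos (π / 2) ^ (1 - 1) = 1 := by
        norm_num [Real.sin_pi_div_two]
      have hgoal : (1 / 2) * (μ (symmDiff (ball y₁ π) (ball y₂ π))).toReal ≤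
          (κ * 3 ^ (d + 1) + 1) * 1 * dist y₁ y₂ := by
        have h3p : (1:ℝ) ≤ 3 ^ (d + 1) := one_le_pow₀ (by norm_num)
        have hδd : κ * δ = κ * dist y₁ y₂ / 2 := by rw [hδdef]; ring
        nlinarith [mul_nonneg hκ hdist0, mul_le_mul_of_nonneg_left h3p (mul_nonneg hκ hdist0)]
      calc (1 / 2) * (μ (symmDiff (ball y₁ π) (ball y₂ π))).toReal
          ≤ (κ * 3 ^ (d + 1) + 1) * 1 * dist y₁ y₂ := hgoal
        _ = (κ * 3 ^ (d + 1) + 1) * (sin (π / 2) ^ (d - 1) * cos (π / 2) ^ (1 - 1)) *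
              dist y₁ y₂ := by rw [hfr]
        _ = (κ * 3 ^ (d + 1) + 1) * sin (π / 2) ^ (d - 1) * cos (π / 2) ^ (1 - 1) *
              dist y₁ y₂ := by ring
    · -- d₀ ≥ 2 : the r = π symmetric difference is null
      have hd02 : 2 ≤ d₀ := by omega
      have hzero : ∀ a b : M, (μ (ball a π \ ball b π)).toReal = 0 := by
        intro a b
        have hX0 : 0 ≤ (μ (ball a π \ ball b π)).toReal := ENNReal.toReal_nonneg
        set X := (μ (ball a π \ ball b π)).toReal with hXdef
        have habπ : dist a b ≤ π := hdiam a b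
        have hab0 : 0 ≤ dist a b := dist_nonneg
        set K₁ : ℝ := κ * 3 ^ (d - 1) * dist a b + κ with hK₁def
        have hK₁0 : 0 ≤ K₁ := by
          rw [hK₁def]
          have : (0:ℝ) ≤ κ * 3 ^ (d - 1) * dist a b := by positivity
          linarith
        have hbound : ∀ s : ℝ, dist a b / 2 ≤ s → s < π → X ≤ K₁ * (π - s) := by
          intro s hs1 hs2
          have hs0 : 0 ≤ s := le_trans (by positivity) hs1
          have hincl2 : ball a π \ ball b π ⊆
              (ball a s \ ball b s) ∪ (ball a π \ ball a s) := by
            rintro z ⟨hz1, hz2⟩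
            by_cases hzs : z ∈ ball a s
            · left
              exact ⟨hzs, fun h => hz2 (ball_subset_ball (le_of_lt hs2) h)⟩
            · right
              exact ⟨hz1, hzs⟩
          have h14 : X ≤ (μ (ball a s \ ball b s)).toReal +
              (μ (ball a π \ ball a s)).toReal := by
            have h15 : μ (ball a π \ ball b π) ≤
                μ (ball a s \ ball b s) + μ (ball a π \ ball a s) :=
              le_trans (measure_mono hincl2) (measure_union_le _ _)
            have h16 := ENNReal.toReal_mono
              (ENNReal.add_ne_top.mpr ⟨measure_ne_top μ _, measure_ne_top μ _⟩) h15
            rwa [ENNReal.toReal_add (measure_ne_top μ _) (measure_ne_top μ _)] at h16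
          -- first part via hmain
          have h17 : (μ (ball a s \ ball b s)).toReal ≤
              (μ (symmDiff (ball a s) (ball b s))).toReal := by
            apply ENNReal.toReal_mono (measure_ne_top μ _)
            apply measure_mono
            rw [Set.symmDiff_def]
            exact Set.subset_union_left
          have h18 := hmain s hs0 hs2 a b (by linarith)
          have hSs : 0 ≤ sin (s / 2) := hsinnn s hs0 (le_of_lt hs2)
          have hCs : 0 ≤ cos (s / 2) := hcosnn s hs0 (le_of_lt hs2)
          have h19 : sin (s / 2) ^ (d - 1) ≤ 1 := pow_le_one₀ hSs (sin_le_one _)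
          have h20 : cos (s / 2) ^ (d₀ - 1) ≤ cos (s / 2) := by
            calc cos (s / 2) ^ (d₀ - 1) ≤ cos (s / 2) ^ 1 :=
                pow_le_pow_of_le_one hCs (cos_le_one _) (by omega)
              _ = cos (s / 2) := pow_one _
          have h21 : cos (s / 2) ≤ (π - s) / 2 := by
            have h22 : cos (s / 2) = sin ((π - s) / 2) := by
              rw [show (π - s) / 2 = π / 2 - s / 2 by ring, Real.sin_pi_div_two_sub]
            rw [h22]
            exact Real.sin_le (by linarith)
          have h23 : sin (s / 2) ^ (d - 1) * cos (s / 2) ^ (d₀ - 1) ≤ (π - s) / 2 := by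
            calc sin (s / 2) ^ (d - 1) * cos (s / 2) ^ (d₀ - 1)
                ≤ 1 * ((π - s) / 2) := by
                  apply mul_le_mul h19 (le_trans h20 h21) (pow_nonneg hCs _) (by norm_num)
              _ = (π - s) / 2 := one_mul _
          have h24 : (μ (ball a s \ ball b s)).toReal ≤
              κ * 3 ^ (d - 1) * (π - s) * dist a b := by
            have h25 : (0:ℝ) ≤ κ * 3 ^ (d - 1) := by positivity
            have h26 : 2 * (κ * 3 ^ (d - 1) * sin (s / 2) ^ (d - 1) *
                cos (s / 2) ^ (d₀ - 1)) * dist a b ≤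
                κ * 3 ^ (d - 1) * (π - s) * dist a b := by
              have h27 : κ * 3 ^ (d - 1) * sin (s / 2) ^ (d - 1) * cos (s / 2) ^ (d₀ - 1) ≤
                  κ * 3 ^ (d - 1) * ((π - s) / 2) := by
                calc κ * 3 ^ (d - 1) * sin (s / 2) ^ (d - 1) * cos (s / 2) ^ (d₀ - 1)
                    = κ * 3 ^ (d - 1) * (sin (s / 2) ^ (d - 1) * cos (s / 2) ^ (d₀ - 1)) := by
                      ring
                  _ ≤ κ * 3 ^ (d - 1) * ((π - s) / 2) :=
                      mul_le_mul_of_nonneg_left h23 h25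
              nlinarith
            linarith [h17, h18]
          -- second part: annulus
          have h28 : (μ (ball a π \ ball a s)).toReal ≤ κ * (π - s) := by
            rw [hann a s π hs0 (le_of_lt hs2) (le_refl _)]
            have h29 : (∫ u in s..π, f u) ≤ 1 * (π - s) :=
              hint_le s π 1 (le_of_lt hs2) (fun u hu => hf_le_one u (le_trans hs0 hu.1) hu.2)
            have := mul_le_mul_of_nonneg_left h29 hκ
            calc κ * (∫ u in s..π, f u) ≤ κ * (1 * (π - s)) := this
              _ = κ * (π - s) := by ring
          calc X ≤ (μ (ball a s \ ball b s)).toReal + (μ (ball a π \ ball a s)).toReal := h14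
            _ ≤ κ * 3 ^ (d - 1) * (π - s) * dist a b + κ * (π - s) := by linarith
            _ = K₁ * (π - s) := by rw [hK₁def]; ring
        -- conclude X = 0
        by_contra hXne
        have hXpos : 0 < X := lt_of_le_of_ne hX0 (Ne.symm hXne)
        set s := max (dist a b / 2) (π - X / (K₁ + 1)) with hsdef
        have hs1 : dist a b / 2 ≤ s := le_max_left _ _
        have hs2 : s < π := by
          apply max_lt (by linarith)
          have : 0 < X / (K₁ + 1) := div_pos hXpos (by linarith)
          linarith
        have hs3 : π - X / (K₁ + 1) ≤ s := le_max_right _ _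
        have h30 := hbound s hs1 hs2
        have h31 : π - s ≤ X / (K₁ + 1) := by linarith
        have h32 : K₁ * (π - s) ≤ K₁ * (X / (K₁ + 1)) :=
          mul_le_mul_of_nonneg_left h31 hK₁0
        have h33 : K₁ * (X / (K₁ + 1)) < X := by
          rw [mul_div_assoc']
          rw [div_lt_iff₀ (by linarith)]
          nlinarith
        exact absurd (lt_of_le_of_lt (le_trans h30 h32) h33) (lt_irrefl X)
      have hz1 := hzero y₁ y₂
      have hz2 := hzero y₂ y₁
      have h34 := hsd (ball y₁ π) (ball y₂ π)
      have h35 : cos (π / 2) ^ (d₀ - 1) = 0 := by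
        rw [Real.cos_pi_div_two]
        exact zero_pow (by omega)
      rw [h35]
      have h36 : (1 / 2) * (μ (symmDiff (ball y₁ π) (ball y₂ π))).toReal ≤ 0 := by
        rw [hz1, hz2] at h34
        linarith
      calc (1 / 2) * (μ (symmDiff (ball y₁ π) (ball y₂ π))).toReal ≤ 0 := h36
        _ = (κ * 3 ^ (d + d₀) + 1) * sin (π / 2) ^ (d - 1) * 0 * dist y₁ y₂ := by ring
  · -- middle case: dist/2 ≤ r < π
    have h := hmain r hr0 hrlt y₁ y₂ (by linarith)
    have e1 : κ * 3 ^ (d - 1) ≤ κ * 3 ^ (d + d₀) + 1 := by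
      have e2 : (3:ℝ) ^ (d - 1) ≤ 3 ^ (d + d₀) := pow_le_pow_right₀ (by norm_num) (by omega)
      nlinarith
    have e2 : κ * 3 ^ (d - 1) * sin (r / 2) ^ (d - 1) ≤
        (κ * 3 ^ (d + d₀) + 1) * sin (r / 2) ^ (d - 1) := mul_le_mul_of_nonneg_right e1 hSp
    have e3 := mul_le_mul_of_nonneg_right e2 hCp
    have e4 := mul_le_mul_of_nonneg_right e3 hdist0
    calc (1 / 2) * (μ (symmDiff (ball y₁ r) (ball y₂ r))).toReal
        ≤ (1 / 2) * (2 * (κ * 3 ^ (d - 1) * sin (r / 2) ^ (d - 1) *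
            cos (r / 2) ^ (d₀ - 1)) * dist y₁ y₂) := by linarith
      _ = κ * 3 ^ (d - 1) * sin (r / 2) ^ (d - 1) * cos (r / 2) ^ (d₀ - 1) * dist y₁ y₂ := by
          ring
      _ ≤ (κ * 3 ^ (d + d₀) + 1) * sin (r / 2) ^ (d - 1) * cos (r / 2) ^ (d₀ - 1) *
            dist y₁ y₂ := e4
end
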